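/- arXiv:2511.10548 — 4 statements merged into one kernel-verified Lean document; each statement's English description precedes it below -/
import Mathlib

section
/- Let a_1 < a_2 < ... < a_p be positive integers and e_1, ..., e_p be positive integers. The Young diagram Y(a;e) is wide if and only if for all 1 \le j \le k \le p one has sr_{j,k} \ge sc_{j,k}, i.e., the sum of the lengths of the top a_j rows of the tail subdiagram Y_k is at least the sum of the lengths of its leftmost a_j columns. -/
/-- The multiset of row lengths of the Young diagram `Y(a;e)`:
`e i` rows of length `a i` for `i = 1, ..., p`. -/
def rowMultiset (p : ℕ) (a e : ℕ → ℕ) : Multiset ℕ :=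
  ∑ i ∈ Finset.Icc 1 p, Multiset.replicate (e i) (a i)

/-- The sum of the `w` largest elements of the multiset `S`
(the sum of all of `S` if `S` has at most `w` elements). -/
def topSum (S : Multiset ℕ) (w : ℕ) : ℕ :=
  ((Multiset.sort S (· ≤ ·)).reverse.take w).sum

/-- The sum of the lengths of the leftmost `w` columns of the Young diagram
whose multiset of row lengths is `S`. -/
def colSum (S : Multiset ℕ) (w : ℕ) : ℕ :=
  ∑ c ∈ Finset.Icc 1 w, (S.filter (fun r => c ≤ r)).card

/-- A Young diagram with multiset of row lengths `R` is wide if every subdiagram formed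
by a subset of the rows dominates its conjugate. -/
def Wide (R : Multiset ℕ) : Prop :=
  ∀ S : Multiset ℕ, S ≤ R → ∀ w : ℕ, 0 < w → colSum S w ≤ topSum S w

/-- A Young diagram with multiset of row lengths `R` is Latin if, listing its row lengths
as `l 1, ..., l m`, there is a filling `f` of its cells such that row `i` is filled by a
permutation of `1, ..., l i` and the entries in each column are pairwise distinct. -/
def IsLatin (R : Multiset ℕ) : Prop :=
  ∃ (m : ℕ) (l : ℕ → ℕ) (f : ℕ → ℕ → ℕ),
    (Finset.Icc 1 m).val.map l = R ∧
    (∀ i ∈ Finset.Icc 1 m,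
      Set.InjOn (f i) (Set.Icc 1 (l i)) ∧
      (Finset.Icc 1 (l i)).image (f i) = Finset.Icc 1 (l i)) ∧
    (∀ j, 1 ≤ j → ∀ i₁ ∈ Finset.Icc 1 m, ∀ i₂ ∈ Finset.Icc 1 m,
      j ≤ l i₁ → j ≤ l i₂ → f i₁ j = f i₂ j → i₁ = i₂)

/-- An allocation for the Young diagram `Y(a;e)` with `p` row blocks (where `a 0 = 0`
and `b i = a i - a (i-1)`). -/
def HasAllocation (p : ℕ) (a e : ℕ → ℕ) : Prop :=
  ∃ z : ℕ → ℕ → ℕ → ℕ,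
    (∀ i j, 1 ≤ j → j ≤ i → i ≤ p →
      ∑ k ∈ Finset.Icc 1 i, z i j k = e i * (a j - a (j - 1))) ∧
    (∀ i k, 1 ≤ k → k ≤ i → i ≤ p →
      ∑ j ∈ Finset.Icc 1 i, z i j k = e i * (a k - a (k - 1))) ∧
    (∀ j k, 1 ≤ j → j ≤ p → 1 ≤ k → k ≤ p →
      ∑ i ∈ Finset.Icc (max j k) p, z i j k ≤ (a j - a (j - 1)) * (a k - a (k - 1)))

/-- `sc a e j k`: the sum of the lengths of the leftmost `a j` columns of the tail
subdiagram `Y_k`. -/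
def sc (a e : ℕ → ℕ) (j k : ℕ) : ℕ :=
  ∑ i ∈ Finset.Icc 1 k, e i * min (a i) (a j)

/-- `sr a e j k`: the sum of the lengths of the top `a j` rows of the tail
subdiagram `Y_k`. -/
def sr (a e : ℕ → ℕ) (j k : ℕ) : ℕ :=
  topSum (rowMultiset k a e) (a j)

/-- `se e m k = ∑_{t=m}^{k} e t`. -/
def se (e : ℕ → ℕ) (m k : ℕ) : ℕ :=
  ∑ t ∈ Finset.Icc m k, e t





lemma list_sum_le (L : List ℕ) (x : ℕ) :
    L.sum ≤ L.length * x + (L.map (fun r => r - x)).sum := by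
  induction L with
  | nil => simp
  | cons a L ih =>
    simp only [List.sum_cons, List.length_cons, List.map_cons, Nat.succ_mul]
    omega

lemma list_sum_of_ge (L : List ℕ) (x : ℕ) (h : ∀ r ∈ L, x ≤ r) :
    L.length * x + (L.map (fun r => r - x)).sum = L.sum := by
  induction L with
  | nil => simp
  | cons a L ih =>
    have ha := h a (by simp)
    have := ih (fun r hr => h r (by simp [hr]))
    simp only [List.sum_cons, List.length_cons, List.map_cons, Nat.succ_mul] at *
    omega

lemma sublist_sum_le {l₁ l₂ : List ℕ} (h : List.Sublist l₁ l₂) : l₁.sum ≤ l₂.sum := by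
  induction h with
  | slnil => simp
  | cons a h ih => simp only [List.sum_cons]; omega
  | cons_cons a h ih => simp only [List.sum_cons]; omega

lemma coe_desc (S : Multiset ℕ) : ((Multiset.sort S (· ≤ ·)).reverse : Multiset ℕ) = S := by
  rw [Multiset.coe_reverse, Multiset.sort_eq]

lemma map_sum_desc (S : Multiset ℕ) (f : ℕ → ℕ) :
    ((Multiset.sort S (· ≤ ·)).reverse.map f).sum = (S.map f).sum := by
  conv_rhs => rw [← coe_desc S]
  rfl

lemma topSum_le (S : Multiset ℕ) (w x : ℕ) :
    topSum S w ≤ w * x + (S.map (fun r => r - x)).sum := by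
  set l := (Multiset.sort S (· ≤ ·)).reverse with hl
  have h1 : (l.take w).sum ≤ (l.take w).length * x + ((l.take w).map (fun r => r - x)).sum :=
    list_sum_le _ x
  have h2 : ((l.take w).map (fun r => r - x)).sum ≤ (l.map (fun r => r - x)).sum :=
    sublist_sum_le ((l.take_sublist w).map _)
  have h3 : (l.take w).length ≤ w := by simp [List.length_take]
  have h4 : (l.map (fun r => r - x)).sum = (S.map (fun r => r - x)).sum := map_sum_desc S _
  have h5 : topSum S w = (l.take w).sum := rfl
  have h6 := Nat.mul_le_mul_right x h3
  omega

lemma desc_sorted (S : Multiset ℕ) :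
    (Multiset.sort S (· ≤ ·)).reverse.Pairwise (· ≥ ·) := by
  rw [List.pairwise_reverse]
  exact Multiset.pairwise_sort (s := S) (r := (· ≤ ·))

lemma topSum_ge (S : Multiset ℕ) (w : ℕ) :
    ∃ x, w * x + (S.map (fun r => r - x)).sum ≤ topSum S w := by
  set l := (Multiset.sort S (· ≤ ·)).reverse with hl
  have hsort : l.Pairwise (· ≥ ·) := desc_sorted S
  rcases hd : l.drop w with _ | ⟨b, d'⟩
  · refine ⟨0, ?_⟩
    have hlen : l.length ≤ w := by
      have := congrArg List.length hd
      simp only [List.length_drop, List.length_nil] at this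
      omega
    have htake : l.take w = l := List.take_of_length_le hlen
    have h5 : topSum S w = (l.take w).sum := rfl
    have h6 : (S.map (fun r => r - 0)).sum = (l.map (fun r => r - 0)).sum := (map_sum_desc S _).symm
    simp only [Nat.sub_zero] at h6 ⊢
    rw [htake] at h5
    have : (Multiset.map (fun r => r) S).sum = l.sum := by simpa using h6
    simp only [Multiset.map_id'] at this ⊢
    omega
  · refine ⟨b, ?_⟩
    have hlen : w < l.length := by
      by_contra hc
      rw [List.drop_of_length_le (by omega)] at hd
      exact absurd hd (by simp)
    have htd : l.take w ++ l.drop w = l := List.take_append_drop w l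
    have hpw : (l.take w ++ l.drop w).Pairwise (· ≥ ·) := by rw [htd]; exact hsort
    rw [List.pairwise_append] at hpw
    obtain ⟨-, hdrop, hcross⟩ := hpw
    have hbmem : b ∈ l.drop w := by rw [hd]; simp
    have hb_take : ∀ r ∈ l.take w, b ≤ r := fun r hr => hcross r hr b hbmem
    have hb_drop : ∀ r ∈ l.drop w, r ≤ b := by
      rw [hd] at hdrop ⊢
      intro r hr
      rcases List.mem_cons.mp hr with h | h
      · omega
      · exact (List.pairwise_cons.mp hdrop).1 r h
    have hmapsum : (S.map (fun r => r - b)).sum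
        = ((l.take w).map (fun r => r - b)).sum + ((l.drop w).map (fun r => r - b)).sum := by
      rw [← map_sum_desc S, ← hl]
      conv_lhs => rw [← htd]
      rw [List.map_append, List.sum_append]
    have hdropzero : ((l.drop w).map (fun r => r - b)).sum = 0 := by
      apply List.sum_eq_zero
      intro y hy
      obtain ⟨r, hr, rfl⟩ := List.mem_map.mp hy
      have := hb_drop r hr
      omega
    have hlentake : (l.take w).length = w := by
      rw [List.length_take]
      omega
    have hkey : (l.take w).length * b + ((l.take w).map (fun r => r - b)).sum = (l.take w).sum :=
      list_sum_of_ge _ b hb_take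
    rw [hlentake] at hkey
    have h5 : topSum S w = (l.take w).sum := rfl
    omega

lemma colSum_eq (S : Multiset ℕ) (w : ℕ) :
    colSum S w = (S.map (fun r => min r w)).sum := by
  induction S using Multiset.induction with
  | empty => simp [colSum]
  | cons r S ih =>
    have hfilt : ∀ c, ((r ::ₘ S).filter (fun r => c ≤ r)).card
        = (if c ≤ r then 1 else 0) + (S.filter (fun r => c ≤ r)).card := by
      intro c
      by_cases h : c ≤ r <;> simp [Multiset.filter_cons, h] <;> omega
    have hcount : ∑ c ∈ Finset.Icc 1 w, (if c ≤ r then 1 else 0) = min r w := by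
      rw [Finset.sum_boole]
      have : (Finset.Icc 1 w).filter (fun c => c ≤ r) = Finset.Icc 1 (min r w) := by
        ext c
        simp only [Finset.mem_filter, Finset.mem_Icc]
        omega
      simp [this, Nat.card_Icc]
    simp only [colSum] at ih ⊢
    simp only [hfilt, Finset.sum_add_distrib, hcount, ih, Multiset.map_cons, Multiset.sum_cons]

lemma rowMultiset_map_sum (k : ℕ) (a e : ℕ → ℕ) (f : ℕ → ℕ) :
    ((rowMultiset k a e).map f).sum = ∑ i ∈ Finset.Icc 1 k, e i * f (a i) := by
  rw [rowMultiset]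
  induction (Finset.Icc 1 k) using Finset.induction with
  | empty => simp
  | insert _ _ hx ih =>
    rw [Finset.sum_insert hx, Finset.sum_insert hx, Multiset.map_add, Multiset.sum_add, ih,
      Multiset.map_replicate, Multiset.sum_replicate, smul_eq_mul]

lemma sum_le_of_le {S T : Multiset ℕ} (h : S ≤ T) : S.sum ≤ T.sum := by
  obtain ⟨u, rfl⟩ := Multiset.le_iff_exists_add.mp h
  simp

lemma map_sum_le_of_le {S T : Multiset ℕ} (h : S ≤ T) (f : ℕ → ℕ) :
    (S.map f).sum ≤ (T.map f).sum :=
  sum_le_of_le (Multiset.map_le_map h)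

lemma rowMultiset_mono {k p : ℕ} (a e : ℕ → ℕ) (h : k ≤ p) :
    rowMultiset k a e ≤ rowMultiset p a e :=
  Finset.sum_le_sum_of_subset (Finset.Icc_subset_Icc_right h)

lemma mono_of_step {p : ℕ} {a : ℕ → ℕ} (h : ∀ i, i < p → a i < a (i + 1)) :
    ∀ i j, i ≤ j → j ≤ p → a i ≤ a j := by
  intro i j hij hjp
  induction j with
  | zero =>
    have : i = 0 := by omega
    simp [this]
  | succ n ih =>
    rcases Nat.lt_or_ge i (n + 1) with hc | hc
    · have h1 : a i ≤ a n := ih (by omega) (by omega)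
      have h2 : a n < a (n + 1) := h n (by omega)
      omega
    · have : i = n + 1 := by omega
      simp [this]

lemma core (p : ℕ) (a e : ℕ → ℕ) (ha0 : a 0 = 0)
    (hstep : ∀ i, i < p → a i < a (i + 1))
    (H : ∀ j k x : ℕ, 1 ≤ j → j ≤ k → k ≤ p →
      (∑ i ∈ Finset.Icc 1 k,
        (e i : ℤ) * (min (a i : ℤ) (a j : ℤ) + min (a i : ℤ) (x : ℤ) - (a i : ℤ)))
        ≤ (a j : ℤ) * (x : ℤ))
    (w x : ℕ) :
    (∑ i ∈ Finset.Icc 1 p,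
      (e i : ℤ) * max 0 (min (a i : ℤ) (w : ℤ) + min (a i : ℤ) (x : ℤ) - (a i : ℤ)))
      ≤ (w : ℤ) * (x : ℤ) := by
  have hle := mono_of_step hstep
  have hwx : (0:ℤ) ≤ (w:ℤ) * (x:ℤ) := by positivity
  set K := Nat.findGreatest (fun i => a i < w + x) p with hKdef
  have hKp : K ≤ p := Nat.findGreatest_le p
  have hbig : ∀ i, K < i → i ≤ p → w + x ≤ a i := by
    intro i h1 h2
    have hng := Nat.findGreatest_is_greatest (k := i) (n := p) h1 h2
    simp only [not_lt] at hng
    exact hng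
  have hKspec : K ≠ 0 → a K < w + x := by
    intro h
    have := (Nat.findGreatest_eq_iff.mp hKdef.symm).2.1 h
    exact this
  have hsplit : Finset.Icc 1 p = Finset.Icc 1 K ∪ Finset.Icc (K+1) p := by
    ext i; simp only [Finset.mem_Icc, Finset.mem_union]; omega
  have hdisj : Disjoint (Finset.Icc 1 K) (Finset.Icc (K+1) p) := by
    rw [Finset.disjoint_left]; intro i hi hj
    simp only [Finset.mem_Icc] at hi hj; omega
  rw [hsplit, Finset.sum_union hdisj]
  have hzero : ∑ i ∈ Finset.Icc (K+1) p,
      (e i:ℤ) * max 0 (min (a i:ℤ) (w:ℤ) + min (a i:ℤ) (x:ℤ) - (a i:ℤ)) = 0 := by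
    apply Finset.sum_eq_zero
    intro i hi
    simp only [Finset.mem_Icc] at hi
    have h1 := hbig i (by omega) hi.2
    have hmax : max 0 (min (a i:ℤ) (w:ℤ) + min (a i:ℤ) (x:ℤ) - (a i:ℤ)) = 0 := by omega
    rw [hmax, mul_zero]
  rw [hzero, add_zero]
  have hdropmax : ∀ i ∈ Finset.Icc 1 K,
      (e i:ℤ) * max 0 (min (a i:ℤ) (w:ℤ) + min (a i:ℤ) (x:ℤ) - (a i:ℤ))
        = (e i:ℤ) * (min (a i:ℤ) (w:ℤ) + min (a i:ℤ) (x:ℤ) - (a i:ℤ)) := by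
    intro i hi
    simp only [Finset.mem_Icc] at hi
    have h1 : a i ≤ a K := hle i K hi.2 hKp
    have h2 := hKspec (by omega)
    have hmax : max 0 (min (a i:ℤ) (w:ℤ) + min (a i:ℤ) (x:ℤ) - (a i:ℤ))
        = (min (a i:ℤ) (w:ℤ) + min (a i:ℤ) (x:ℤ) - (a i:ℤ)) := by omega
    rw [hmax]
  rw [Finset.sum_congr rfl hdropmax]
  rcases Nat.eq_zero_or_pos K with hK0 | hK0
  · rw [hK0]
    simpa using hwx
  rcases le_or_gt (a K) w with hc | hc
  · have h1 := H K K x hK0 le_rfl hKp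
    have heq : ∀ i ∈ Finset.Icc 1 K,
        (e i:ℤ) * (min (a i:ℤ) (w:ℤ) + min (a i:ℤ) (x:ℤ) - (a i:ℤ))
        = (e i:ℤ) * (min (a i:ℤ) ((a K):ℤ) + min (a i:ℤ) (x:ℤ) - (a i:ℤ)) := by
      intro i hi
      simp only [Finset.mem_Icc] at hi
      have hik : a i ≤ a K := hle i K hi.2 hKp
      have e1 : min (a i:ℤ) (w:ℤ) = (a i:ℤ) := by omega
      have e2 : min (a i:ℤ) ((a K):ℤ) = (a i:ℤ) := by omega
      rw [e1, e2]
    rw [Finset.sum_congr rfl heq]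
    refine le_trans h1 ?_
    have hcz : ((a K):ℤ) ≤ (w:ℤ) := by exact_mod_cast hc
    exact mul_le_mul_of_nonneg_right hcz (by positivity)
  · set j := Nat.findGreatest (fun i => a i ≤ w) K with hjdef
    have hjK : j ≤ K := Nat.findGreatest_le K
    have hjw : a j ≤ w := by
      rcases Nat.eq_zero_or_pos j with h0 | h0
      · rw [h0, ha0]; omega
      · exact (Nat.findGreatest_eq_iff.mp hjdef.symm).2.1 (by omega)
    have hjlt : j < K := by
      rcases eq_or_lt_of_le hjK with h | h
      · exfalso; rw [h] at hjw; omega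
      · exact h
    have hj1 : w < a (j+1) := by
      have hng := Nat.findGreatest_is_greatest (P := fun i => a i ≤ w) (k := j+1) (n := K)
        (by omega) (by omega)
      simp only [not_le] at hng
      exact hng
    have H2 := H (j+1) K x (by omega) (by omega) hKp
    have H1 : (∑ i ∈ Finset.Icc 1 K,
        (e i:ℤ) * (min (a i:ℤ) ((a j):ℤ) + min (a i:ℤ) (x:ℤ) - (a i:ℤ)))
        ≤ ((a j):ℤ) * (x:ℤ) := by
      rcases Nat.eq_zero_or_pos j with h0 | h0
      · have hz : ((a j : ℕ):ℤ) = 0 := by rw [h0, ha0]; simp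
        rw [hz, zero_mul]
        apply Finset.sum_nonpos
        intro i hi
        have h2 : min (a i:ℤ) (x:ℤ) ≤ (a i:ℤ) := min_le_left _ _
        have h3 : min (a i:ℤ) (0:ℤ) ≤ 0 := min_le_right _ _
        have h4 : (0:ℤ) ≤ (e i:ℤ) := by positivity
        have h5 : min (a i:ℤ) (0:ℤ) + min (a i:ℤ) (x:ℤ) - (a i:ℤ) ≤ 0 := by omega
        nlinarith
      · exact H j K x h0 (by omega) hKp
    set lam : ℤ := ((a (j+1)):ℤ) - (w:ℤ) with hlam
    set mu : ℤ := (w:ℤ) - ((a j):ℤ) with hmu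
    have hlam0 : 0 < lam := by
      have : (w:ℤ) < ((a (j+1)):ℤ) := by exact_mod_cast hj1
      omega
    have hmu0 : 0 ≤ mu := by
      have : ((a j):ℤ) ≤ (w:ℤ) := by exact_mod_cast hjw
      omega
    have key : ∀ i ∈ Finset.Icc 1 K,
        lam * ((e i:ℤ) * (min (a i:ℤ) ((a j):ℤ) + min (a i:ℤ) (x:ℤ) - (a i:ℤ)))
        + mu * ((e i:ℤ) * (min (a i:ℤ) ((a (j+1)):ℤ) + min (a i:ℤ) (x:ℤ) - (a i:ℤ)))
        = (lam + mu) * ((e i:ℤ) * (min (a i:ℤ) (w:ℤ) + min (a i:ℤ) (x:ℤ) - (a i:ℤ))) := by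
      intro i hi
      simp only [Finset.mem_Icc] at hi
      rcases le_or_gt (a i) (a j) with hsmol | hbigg
      · have hstep2 : a j < a (j+1) := hstep j (by omega)
        have e1 : min (a i:ℤ) ((a j):ℤ) = (a i:ℤ) := by omega
        have e2 : min (a i:ℤ) (w:ℤ) = (a i:ℤ) := by omega
        have e3 : min (a i:ℤ) ((a (j+1)):ℤ) = (a i:ℤ) := by omega
        rw [e1, e2, e3]; ring
      · have hij : j + 1 ≤ i := by
          by_contra hcon
          have : a i ≤ a j := hle i j (by omega) (le_trans (le_of_lt hjlt) hKp)
          omega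
        have h1 : a (j+1) ≤ a i := hle _ _ hij (le_trans hi.2 hKp)
        have e1 : min (a i:ℤ) ((a j):ℤ) = ((a j):ℤ) := by omega
        have e2 : min (a i:ℤ) ((a (j+1)):ℤ) = ((a (j+1)):ℤ) := by omega
        have e3 : min (a i:ℤ) (w:ℤ) = (w:ℤ) := by omega
        rw [e1, e2, e3, hlam, hmu]; ring
    have comb : (lam + mu) * (∑ i ∈ Finset.Icc 1 K,
          (e i:ℤ) * (min (a i:ℤ) (w:ℤ) + min (a i:ℤ) (x:ℤ) - (a i:ℤ)))
        = lam * (∑ i ∈ Finset.Icc 1 K,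
          (e i:ℤ) * (min (a i:ℤ) ((a j):ℤ) + min (a i:ℤ) (x:ℤ) - (a i:ℤ)))
        + mu * (∑ i ∈ Finset.Icc 1 K,
          (e i:ℤ) * (min (a i:ℤ) ((a (j+1)):ℤ) + min (a i:ℤ) (x:ℤ) - (a i:ℤ))) := by
      rw [Finset.mul_sum, Finset.mul_sum, Finset.mul_sum, ← Finset.sum_add_distrib]
      exact Finset.sum_congr rfl (fun i hi => (key i hi).symm)
    have hfin : (lam + mu) * (∑ i ∈ Finset.Icc 1 K,
          (e i:ℤ) * (min (a i:ℤ) (w:ℤ) + min (a i:ℤ) (x:ℤ) - (a i:ℤ)))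
        ≤ (lam + mu) * ((w:ℤ) * (x:ℤ)) := by
      rw [comb]
      have b1 := mul_le_mul_of_nonneg_left H1 (le_of_lt hlam0)
      have b2 := mul_le_mul_of_nonneg_left H2 hmu0
      have hident : lam * (((a j):ℤ) * (x:ℤ)) + mu * (((a (j+1)):ℤ) * (x:ℤ))
          = (lam + mu) * ((w:ℤ) * (x:ℤ)) := by
        rw [hlam, hmu]; ring
      linarith
    exact le_of_mul_le_mul_left hfin (by omega)



lemma bridge1 (a e : ℕ → ℕ) (j k : ℕ) (hsc : sc a e j k ≤ sr a e j k) (x : ℕ) :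
    (∑ i ∈ Finset.Icc 1 k,
      (e i : ℤ) * (min (a i : ℤ) (a j : ℤ) + min (a i : ℤ) (x : ℤ) - (a i : ℤ)))
      ≤ (a j : ℤ) * (x : ℤ) := by
  have h1 : sc a e j k ≤ a j * x + ∑ i ∈ Finset.Icc 1 k, e i * (a i - x) := by
    calc sc a e j k ≤ sr a e j k := hsc
      _ = topSum (rowMultiset k a e) (a j) := rfl
      _ ≤ a j * x + ((rowMultiset k a e).map (fun r => r - x)).sum := topSum_le _ _ _
      _ = a j * x + ∑ i ∈ Finset.Icc 1 k, e i * (a i - x) := by rw [rowMultiset_map_sum]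
  rw [sc] at h1
  have h1z : (∑ i ∈ Finset.Icc 1 k, (e i : ℤ) * min ((a i : ℕ) : ℤ) ((a j : ℕ) : ℤ))
      ≤ (a j : ℤ) * (x : ℤ) + ∑ i ∈ Finset.Icc 1 k, (e i : ℤ) * (((a i - x : ℕ)) : ℤ) := by
    exact_mod_cast h1
  have hterm : ∀ i ∈ Finset.Icc 1 k,
      (e i : ℤ) * (min (a i : ℤ) (a j : ℤ) + min (a i : ℤ) (x : ℤ) - (a i : ℤ))
      = (e i : ℤ) * min ((a i : ℕ) : ℤ) ((a j : ℕ) : ℤ)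
        - (e i : ℤ) * (((a i - x : ℕ)) : ℤ) := by
    intro i hi
    have hx : (((a i - x : ℕ)) : ℤ) = (a i : ℤ) - min (a i : ℤ) (x : ℤ) := by omega
    rw [hx]; ring
  rw [Finset.sum_congr rfl hterm, Finset.sum_sub_distrib]
  linarith

theorem wide_iff_aux (p : ℕ) (hp : 1 ≤ p) (a e : ℕ → ℕ)
    (ha1 : 0 < a 1)
    (hmono : ∀ i, 1 ≤ i → i < p → a i < a (i + 1))
    (he : ∀ i, 1 ≤ i → i ≤ p → 0 < e i) :
    (∀ S : Multiset ℕ, S ≤ rowMultiset p a e → ∀ w : ℕ, 0 < w → colSum S w ≤ topSum S w) ↔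
      ∀ j k, 1 ≤ j → j ≤ k → k ≤ p → sc a e j k ≤ sr a e j k := by
  set a' : ℕ → ℕ := fun i => if i = 0 then 0 else a i with ha'
  have ha'0 : a' 0 = 0 := by simp [ha']
  have ha'eq : ∀ i, 1 ≤ i → a' i = a i := by
    intro i hi
    simp only [ha']
    rw [if_neg (by omega)]
  have hstep' : ∀ i, i < p → a' i < a' (i + 1) := by
    intro i hip
    rcases Nat.eq_zero_or_pos i with rfl | h
    · rw [ha'0, ha'eq 1 le_rfl]; exact ha1
    · rw [ha'eq i h, ha'eq (i+1) (by omega)]; exact hmono i h hip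
  have hle' := mono_of_step hstep'
  have hle : ∀ i j, 1 ≤ i → i ≤ j → j ≤ p → a i ≤ a j := by
    intro i j h1 h2 h3
    have := hle' i j h2 h3
    rwa [ha'eq i h1, ha'eq j (by omega)] at this
  constructor
  · intro hW j k hj hjk hkp
    have hsub := rowMultiset_mono a e hkp
    have haj : 0 < a j := lt_of_lt_of_le ha1 (hle 1 j le_rfl hj (le_trans hjk hkp))
    have := hW _ hsub (a j) haj
    rwa [colSum_eq, rowMultiset_map_sum] at this
  · intro hsr S hS w hw
    obtain ⟨x, hx⟩ := topSum_ge S w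
    have Hcore : ∀ j k x : ℕ, 1 ≤ j → j ≤ k → k ≤ p →
        (∑ i ∈ Finset.Icc 1 k,
          (e i : ℤ) * (min (a' i : ℤ) (a' j : ℤ) + min (a' i : ℤ) (x : ℤ) - (a' i : ℤ)))
          ≤ (a' j : ℤ) * (x : ℤ) := by
      intro j k y hj hjk hkp
      have hcongr : ∀ i ∈ Finset.Icc 1 k,
          (e i : ℤ) * (min (a' i : ℤ) (a' j : ℤ) + min (a' i : ℤ) (y : ℤ) - (a' i : ℤ))
          = (e i : ℤ) * (min (a i : ℤ) (a j : ℤ) + min (a i : ℤ) (y : ℤ) - (a i : ℤ)) := by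
        intro i hi
        simp only [Finset.mem_Icc] at hi
        rw [ha'eq i hi.1, ha'eq j hj]
      rw [Finset.sum_congr rfl hcongr, ha'eq j hj]
      exact bridge1 a e j k (hsr j k hj hjk hkp) y
    have hcore := core p a' e ha'0 hstep' Hcore w x
    have hcongr2 : ∀ i ∈ Finset.Icc 1 p,
        (e i : ℤ) * max 0 (min (a' i : ℤ) (w : ℤ) + min (a' i : ℤ) (x : ℤ) - (a' i : ℤ))
        = ((e i * (min (a i) w - (a i - x)) : ℕ) : ℤ) := by
      intro i hi
      simp only [Finset.mem_Icc] at hi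
      rw [ha'eq i hi.1, Nat.cast_mul]
      congr 1
      omega
    rw [Finset.sum_congr rfl hcongr2, ← Nat.cast_sum] at hcore
    have star : ∑ i ∈ Finset.Icc 1 p, e i * (min (a i) w - (a i - x)) ≤ w * x := by
      exact_mod_cast hcore
    have c1 : colSum S w = (S.map (fun r => min r w)).sum := colSum_eq S w
    have c2 : (S.map (fun r => min r w)).sum
        ≤ (S.map (fun r => (r - x) + (min r w - (r - x)))).sum :=
      Multiset.sum_map_le_sum_map _ _ (fun r _ => by omega)
    have c3 : (S.map (fun r => (r - x) + (min r w - (r - x)))).sum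
        = (S.map (fun r => r - x)).sum + (S.map (fun r => min r w - (r - x))).sum :=
      Multiset.sum_map_add
    have c4 : (S.map (fun r => min r w - (r - x))).sum
        ≤ ((rowMultiset p a e).map (fun r => min r w - (r - x))).sum :=
      map_sum_le_of_le hS _
    have c5 : ((rowMultiset p a e).map (fun r => min r w - (r - x))).sum
        = ∑ i ∈ Finset.Icc 1 p, e i * (min (a i) w - (a i - x)) :=
      rowMultiset_map_sum _ _ _ _
    omega

/-- `Y(a;e)` is wide iff `sr j k ≥ sc j k` for all `1 ≤ j ≤ k ≤ p`. -/
theorem wide_iff_sr_ge_sc (p : ℕ) (hp : 1 ≤ p) (a e : ℕ → ℕ)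
    (ha1 : 0 < a 1)
    (hmono : ∀ i, 1 ≤ i → i < p → a i < a (i + 1))
    (he : ∀ i, 1 ≤ i → i ≤ p → 0 < e i) :
    Wide (rowMultiset p a e) ↔
      ∀ j k, 1 ≤ j → j ≤ k → k ≤ p → sc a e j k ≤ sr a e j k :=
  wide_iff_aux p hp a e ha1 hmono he
end

section
/- Let a_1 < a_2 < ... < a_p be positive integers and e_1, ..., e_p be positive integers, and let se_{m,k} = \sum_{t=m}^{k} e_t. The Young diagram Y(a;e) is wide if and only if the following two families of inequalities hold: (i) a_k \ge \sum_{i=1}^{k} e_i for every k with 1 \le k \le p; and (ii) for all 1 \le j < k \le p and every i with 2 \le i \le k such that se_{i,k} < a_j \le se_{i-1,k}, one has \sum_{t=i}^{k} e_t a_t + (a_j - se_{i,k}) a_{i-1} \ge \sum_{t=1}^{j-1} a_t e_t + a_j \sum_{t=j}^{k} e_t. -/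
/-- number of elements of `S` that are `≥ c` (height of column `c`). -/
def nc (S : Multiset ℕ) (c : ℕ) : ℕ := Multiset.card (S.filter (fun r => c ≤ r))

lemma nc_zero (c : ℕ) : nc 0 c = 0 := rfl

lemma nc_add (S T : Multiset ℕ) (c : ℕ) : nc (S + T) c = nc S c + nc T c := by
  simp [nc, Multiset.filter_add]

lemma nc_cons (y : ℕ) (S : Multiset ℕ) (c : ℕ) :
    nc (y ::ₘ S) c = nc S c + (if c ≤ y then 1 else 0) := by
  simp only [nc, Multiset.filter_cons]
  split <;> simp [add_comm]

lemma nc_le_card (S : Multiset ℕ) (c : ℕ) : nc S c ≤ Multiset.card S :=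
  Multiset.card_le_card (Multiset.filter_le _ _)

lemma nc_anti (S : Multiset ℕ) {c c' : ℕ} (h : c ≤ c') : nc S c' ≤ nc S c := by
  apply Multiset.card_le_card
  apply Multiset.le_filter.2
  refine ⟨Multiset.filter_le _ _, ?_⟩
  intro r hr
  exact le_trans h (Multiset.of_mem_filter hr)

lemma nc_mono (c : ℕ) {S T : Multiset ℕ} (h : S ≤ T) : nc S c ≤ nc T c :=
  Multiset.card_le_card (Multiset.filter_le_filter _ h)

lemma mem_le_sum {S : Multiset ℕ} {r : ℕ} (h : r ∈ S) : r ≤ S.sum :=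
  Multiset.single_le_sum (fun _ _ => Nat.zero_le _) _ h

lemma nc_eq_zero_of_big {S : Multiset ℕ} {c : ℕ} (h : ∀ r ∈ S, r < c) : nc S c = 0 := by
  simp only [nc, Multiset.card_eq_zero]
  rw [Multiset.filter_eq_nil]
  intro r hr
  exact not_le.2 (h r hr)

lemma colSum_eq_sum_nc (S : Multiset ℕ) (w : ℕ) :
    colSum S w = ∑ c ∈ Finset.Icc 1 w, nc S c := rfl

/-- sum as a sum of column heights -/
lemma sum_eq_sum_nc (S : Multiset ℕ) {B : ℕ} (hB : ∀ r ∈ S, r ≤ B) :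
    S.sum = ∑ c ∈ Finset.Icc 1 B, nc S c := by
  induction S using Multiset.induction with
  | empty => simp [nc_zero]
  | cons y S ih =>
    have hy : y ≤ B := hB y (Multiset.mem_cons_self _ _)
    have hS : ∀ r ∈ S, r ≤ B := fun r hr => hB r (Multiset.mem_cons_of_mem hr)
    rw [Multiset.sum_cons, ih hS]
    simp only [nc_cons, Finset.sum_add_distrib]
    have : ∑ c ∈ Finset.Icc 1 B, (if c ≤ y then 1 else 0) = y := by
      rw [Finset.sum_ite, Finset.sum_const, Finset.sum_const]
      have : (Finset.Icc 1 B).filter (fun c => c ≤ y) = Finset.Icc 1 y := by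
        ext c; simp only [Finset.mem_filter, Finset.mem_Icc]; omega
      simp [this]
    omega

/-- The sorted list of a nonempty multiset ends with its max. -/
lemma sort_eq_append_max {S : Multiset ℕ} {x : ℕ} (hx : x ∈ S) (hmax : ∀ y ∈ S, y ≤ x) :
    Multiset.sort S (· ≤ ·) = Multiset.sort (S.erase x) (· ≤ ·) ++ [x] := by
  apply List.Perm.eq_of_pairwise' (r := (· ≤ ·))
  rotate_right
  · rw [← Multiset.coe_eq_coe]
    rw [show ((↑(Multiset.sort (S.erase x) (· ≤ ·) ++ [x]) : Multiset ℕ))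
        = ↑(Multiset.sort (S.erase x) (· ≤ ·)) + (↑([x] : List ℕ) : Multiset ℕ) by
      rw [← Multiset.coe_add]]
    rw [Multiset.sort_eq, Multiset.sort_eq]
    rw [show ((↑([x] : List ℕ)) : Multiset ℕ) = {x} from rfl]
    rw [show (S.erase x + ({x} : Multiset ℕ)) = x ::ₘ S.erase x by
      rw [add_comm]; rfl]
    rw [Multiset.cons_erase hx]
  · exact Multiset.pairwise_sort _ _
  · rw [List.pairwise_append]
    refine ⟨Multiset.pairwise_sort _ _, List.pairwise_singleton _ x, ?_⟩
    intro y hy z hz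
    simp only [List.mem_singleton] at hz
    have hy' : y ∈ S.erase x := by rwa [Multiset.mem_sort] at hy
    rw [hz]
    exact hmax y (Multiset.mem_of_mem_erase hy')

lemma topSum_zero (S : Multiset ℕ) : topSum S 0 = 0 := by simp [topSum]

lemma topSum_erase_max {S : Multiset ℕ} {x : ℕ} (hx : x ∈ S) (hmax : ∀ y ∈ S, y ≤ x)
    (w : ℕ) : topSum S (w + 1) = x + topSum (S.erase x) w := by
  unfold topSum
  rw [sort_eq_append_max hx hmax, List.reverse_append]
  simp [List.take_succ_cons]

/-- Key: `topSum` as a sum over columns. -/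
lemma topSum_eq_sum_min (S : Multiset ℕ) (w : ℕ) {B : ℕ} (hB : ∀ r ∈ S, r ≤ B) :
    topSum S w = ∑ c ∈ Finset.Icc 1 B, min (nc S c) w := by
  obtain ⟨n, hn⟩ : ∃ n, Multiset.card S = n := ⟨_, rfl⟩
  induction n using Nat.strong_induction_on generalizing S w with
  | _ n ih =>
  rcases Nat.eq_zero_or_pos n with h0 | hpos
  · subst h0
    have : S = 0 := by rwa [Multiset.card_eq_zero] at hn
    subst this
    simp [topSum, nc_zero]
  · have hS0 : S ≠ 0 := by
      intro h; rw [h] at hn; simp at hn; omega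
    have hne : S.toFinset.Nonempty := Multiset.toFinset_nonempty.2 hS0
    set x := S.toFinset.max' hne with hxdef
    have hxS : x ∈ S := Multiset.mem_toFinset.1 (S.toFinset.max'_mem hne)
    have hmax : ∀ y ∈ S, y ≤ x := fun y hy =>
      S.toFinset.le_max' y (Multiset.mem_toFinset.2 hy)
    have hxB : x ≤ B := hB x hxS
    have hcard : Multiset.card (S.erase x) = n - 1 := by
      rw [Multiset.card_erase_of_mem hxS, hn]; rfl
    have hBe : ∀ r ∈ S.erase x, r ≤ B := fun r hr => hB r (Multiset.mem_of_mem_erase hr)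
    have hnc : ∀ c, nc S c = nc (S.erase x) c + (if c ≤ x then 1 else 0) := by
      intro c
      conv_lhs => rw [← Multiset.cons_erase hxS]
      exact nc_cons x (S.erase x) c
    have hnc0 : ∀ c, x < c → nc (S.erase x) c = 0 := by
      intro c hc
      exact nc_eq_zero_of_big (fun r hr => lt_of_le_of_lt (hmax r (Multiset.mem_of_mem_erase hr)) hc)
    cases w with
    | zero =>
      simp [topSum_zero]
    | succ w =>
      rw [topSum_erase_max hxS hmax w, ih (n-1) (by omega) (S.erase x) w hBe hcard]
      have key : ∀ c ∈ Finset.Icc 1 B,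
          min (nc S c) (w+1) = min (nc (S.erase x) c) w + (if c ≤ x then 1 else 0) := by
        intro c hc
        rw [hnc c]
        by_cases hcx : c ≤ x
        · simp only [hcx, if_true]
          omega
        · simp only [hcx, if_false, add_zero]
          rw [hnc0 c (not_le.1 hcx)]
          simp
      rw [Finset.sum_congr rfl key, Finset.sum_add_distrib]
      have : ∑ c ∈ Finset.Icc 1 B, (if c ≤ x then 1 else 0) = x := by
        rw [Finset.sum_ite, Finset.sum_const, Finset.sum_const]
        have : (Finset.Icc 1 B).filter (fun c => c ≤ x) = Finset.Icc 1 x := by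
          ext c; simp only [Finset.mem_filter, Finset.mem_Icc]; omega
        simp [this]
      omega

/-- Number of columns of height `≥ w`; equals the `w`-th largest element of `S`. -/
def sig (S : Multiset ℕ) (w : ℕ) : ℕ :=
  ((Finset.Icc 1 S.sum).filter (fun c => w ≤ nc S c)).card

lemma sig_anti (S : Multiset ℕ) {w w' : ℕ} (h : w ≤ w') : sig S w' ≤ sig S w := by
  apply Finset.card_le_card
  intro c hc
  simp only [Finset.mem_filter] at hc ⊢
  exact ⟨hc.1, le_trans h hc.2⟩

lemma sig_cons_mono (y : ℕ) (S : Multiset ℕ) (w : ℕ) : sig S w ≤ sig (y ::ₘ S) w := by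
  apply Finset.card_le_card
  intro c hc
  simp only [Finset.mem_filter, Finset.mem_Icc] at hc ⊢
  have h1 : nc S c ≤ nc (y ::ₘ S) c := nc_mono c (Multiset.le_cons_self S y)
  have h2 : S.sum ≤ (y ::ₘ S).sum := by rw [Multiset.sum_cons]; omega
  omega

lemma sig_char (S : Multiset ℕ) {w c : ℕ} (hw : 1 ≤ w) (hc : 1 ≤ c) :
    c ≤ sig S w ↔ w ≤ nc S c := by
  constructor
  · intro h
    by_contra hlt
    push_neg at hlt
    have hsub : (Finset.Icc 1 S.sum).filter (fun c' => w ≤ nc S c') ⊆ Finset.Icc 1 (c-1) := by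
      intro c' hc'
      simp only [Finset.mem_filter, Finset.mem_Icc] at hc' ⊢
      refine ⟨hc'.1.1, ?_⟩
      by_contra hgt
      push_neg at hgt
      have : nc S c' ≤ nc S c := nc_anti S (by omega)
      omega
    have := Finset.card_le_card hsub
    rw [Nat.card_Icc] at this
    unfold sig at h
    omega
  · intro h
    have hsub : Finset.Icc 1 c ⊆ (Finset.Icc 1 S.sum).filter (fun c' => w ≤ nc S c') := by
      intro c' hc'
      simp only [Finset.mem_Icc] at hc'
      have h1 : w ≤ nc S c' := le_trans h (nc_anti S hc'.2)
      have h2 : c' ≤ S.sum := by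
        have hpos : 0 < nc S c' := by omega
        rw [nc] at hpos
        obtain ⟨r, hr⟩ := Multiset.card_pos_iff_exists_mem.1 hpos
        have hrS : r ∈ S := Multiset.mem_of_mem_filter hr
        have : c' ≤ r := Multiset.of_mem_filter hr
        exact le_trans this (mem_le_sum hrS)
      simp only [Finset.mem_filter, Finset.mem_Icc]
      exact ⟨⟨hc'.1, h2⟩, h1⟩
    have := Finset.card_le_card hsub
    rwa [Nat.card_Icc, Nat.add_sub_cancel] at this

lemma topSum_le_sum (S : Multiset ℕ) (w : ℕ) : topSum S w ≤ S.sum := by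
  rw [topSum_eq_sum_min S w (B := S.sum) (fun r hr => mem_le_sum hr)]
  conv_rhs => rw [sum_eq_sum_nc S (B := S.sum) (fun r hr => mem_le_sum hr)]
  exact Finset.sum_le_sum (fun c _ => min_le_left _ _)

lemma topSum_eq_sum_of_card_le {S : Multiset ℕ} {w : ℕ} (h : Multiset.card S ≤ w) :
    topSum S w = S.sum := by
  rw [topSum_eq_sum_min S w (B := S.sum) (fun r hr => mem_le_sum hr)]
  conv_rhs => rw [sum_eq_sum_nc S (B := S.sum) (fun r hr => mem_le_sum hr)]
  exact Finset.sum_congr rfl (fun c _ => min_eq_left (le_trans (nc_le_card S c) h))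

lemma colSum_le_sum (S : Multiset ℕ) (w : ℕ) : colSum S w ≤ S.sum := by
  rw [colSum_eq_sum_nc]
  conv_rhs => rw [sum_eq_sum_nc S (B := max w S.sum)
      (fun r hr => le_trans (mem_le_sum hr) (le_max_right _ _))]
  apply Finset.sum_le_sum_of_subset
  apply Finset.Icc_subset_Icc_right (le_max_left _ _)

/-- The fundamental lower bound: any submultiset with at most `w` elements. -/
lemma sum_le_topSum {T S : Multiset ℕ} {w : ℕ} (hTS : T ≤ S) (hT : Multiset.card T ≤ w) :
    T.sum ≤ topSum S w := by
  have hB : ∀ r ∈ S, r ≤ S.sum := fun r hr => mem_le_sum hr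
  have hBT : ∀ r ∈ T, r ≤ S.sum := fun r hr => mem_le_sum (Multiset.mem_of_le hTS hr)
  rw [topSum_eq_sum_min S w hB]
  conv_lhs => rw [sum_eq_sum_nc T hBT]
  apply Finset.sum_le_sum
  intro c _
  exact le_min (nc_mono c hTS) (le_trans (nc_le_card T c) hT)

/-- Exact effect of adding one element on `topSum`. -/
lemma topSum_cons (y : ℕ) (S : Multiset ℕ) {w : ℕ} (hw : 1 ≤ w) :
    topSum (y ::ₘ S) w + min y (sig S w) = topSum S w + y := by
  set B := y + S.sum with hBdef
  have hB : ∀ r ∈ S, r ≤ B := fun r hr => le_trans (mem_le_sum hr) (by omega)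
  have hB' : ∀ r ∈ y ::ₘ S, r ≤ B := by
    intro r hr
    rcases Multiset.mem_cons.1 hr with h | h
    · omega
    · exact hB r h
  rw [topSum_eq_sum_min S w hB, topSum_eq_sum_min (y ::ₘ S) w hB']
  have key : ∀ c, min (nc (y ::ₘ S) c) w
      = min (nc S c) w + (if c ≤ y ∧ nc S c < w then 1 else 0) := by
    intro c
    rw [nc_cons]
    by_cases h1 : c ≤ y
    · by_cases h2 : nc S c < w
      · simp only [h1, if_true, h2, and_true, if_true]
        omega
      · simp only [h1, if_true, true_and, h2, if_false]
        omega
    · simp only [h1, if_false, false_and, if_false]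
      omega
  rw [Finset.sum_congr rfl (fun c _ => key c), Finset.sum_add_distrib]
  have count_eq : ∑ c ∈ Finset.Icc 1 B, (if c ≤ y ∧ nc S c < w then 1 else 0)
      = y - min y (sig S w) := by
    rw [Finset.sum_ite, Finset.sum_const, Finset.sum_const, smul_eq_mul, smul_eq_mul,
        mul_one, mul_zero, add_zero]
    have hset : (Finset.Icc 1 B).filter (fun c => c ≤ y ∧ nc S c < w)
        = (Finset.Icc 1 y) \ (Finset.Icc 1 (min y (sig S w))) := by
      ext c
      simp only [Finset.mem_filter, Finset.mem_Icc, Finset.mem_sdiff]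
      constructor
      · rintro ⟨⟨hc1, _⟩, hcy, hnc⟩
        refine ⟨⟨hc1, hcy⟩, ?_⟩
        intro ⟨_, hcs⟩
        have := (sig_char S hw hc1).1 (le_trans hcs (min_le_right _ _))
        omega
      · rintro ⟨⟨hc1, hcy⟩, hnot⟩
        refine ⟨⟨hc1, by omega⟩, hcy, ?_⟩
        by_contra hge
        push_neg at hge
        have := (sig_char S hw hc1).2 hge
        omega
    rw [hset, Finset.card_sdiff_of_subset (by
      apply Finset.Icc_subset_Icc_right
      exact min_le_left _ _)]
    rw [Nat.card_Icc, Nat.card_Icc]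
    omega
  have hmin : min y (sig S w) ≤ y := min_le_left _ _
  omega

lemma topSum_add_multi (S A : Multiset ℕ) {w : ℕ} (hw : 1 ≤ w) :
    topSum (S + A) w ≤ topSum S w + (A.map (fun y => y - sig S w)).sum := by
  induction A using Multiset.induction with
  | empty => simp
  | cons y A ih =>
    have h1 : S + y ::ₘ A = y ::ₘ (S + A) := by
      rw [Multiset.add_cons]
    rw [h1]
    have h2 := topSum_cons y (S + A) hw
    have h3 : sig S w ≤ sig (S + A) w := by
      clear h1 h2 ih
      induction A using Multiset.induction with
      | empty => simp
      | cons z A ih2 =>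
        have : S + z ::ₘ A = z ::ₘ (S + A) := by rw [Multiset.add_cons]
        rw [this]
        exact le_trans ih2 (sig_cons_mono z (S + A) w)
    have h4 : min y (sig S w) ≤ min y (sig (S+A) w) := by
      exact le_min (min_le_left _ _) (le_trans (min_le_right _ _) h3)
    have h5 : (Multiset.map (fun y => y - sig S w) (y ::ₘ A)).sum
        = (y - sig S w) + (Multiset.map (fun y => y - sig S w) A).sum := by
      rw [Multiset.map_cons, Multiset.sum_cons]
    rw [h5]
    have hy : y - min y (sig S w) ≤ y - sig S w + 0 := by omega
    omega

lemma topSum_step (S : Multiset ℕ) (w : ℕ) :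
    topSum S (w + 1) = topSum S w + sig S (w + 1) := by
  have hB : ∀ r ∈ S, r ≤ S.sum := fun r hr => mem_le_sum hr
  rw [topSum_eq_sum_min S (w+1) hB, topSum_eq_sum_min S w hB]
  have key : ∀ c, min (nc S c) (w+1) = min (nc S c) w + (if w + 1 ≤ nc S c then 1 else 0) := by
    intro c; split <;> omega
  rw [Finset.sum_congr rfl (fun c _ => key c), Finset.sum_add_distrib]
  congr 1
  rw [Finset.sum_ite, Finset.sum_const, Finset.sum_const]
  simp [sig]

lemma topSum_interval (S : Multiset ℕ) {u w : ℕ} (h : u ≤ w) :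
    topSum S w = topSum S u + ∑ c ∈ Finset.Icc (u+1) w, sig S c := by
  induction w, h using Nat.le_induction with
  | base => simp
  | succ w hw ih =>
    rw [topSum_step S w, ih]
    have : Finset.Icc (u+1) (w+1) = insert (w+1) (Finset.Icc (u+1) w) := by
      ext c; simp only [Finset.mem_Icc, Finset.mem_insert]; omega
    rw [this, Finset.sum_insert (by simp)]
    omega

lemma colSum_interval (S : Multiset ℕ) {u w : ℕ} (h : u ≤ w) :
    colSum S w = colSum S u + ∑ c ∈ Finset.Icc (u+1) w, nc S c := by
  rw [colSum_eq_sum_nc, colSum_eq_sum_nc]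
  have : Finset.Icc 1 w = Finset.Icc 1 u ∪ Finset.Icc (u+1) w := by
    ext c; simp only [Finset.mem_Icc, Finset.mem_union]; omega
  rw [this, Finset.sum_union (by
    rw [Finset.disjoint_left]
    intro c hc hc'
    simp only [Finset.mem_Icc] at hc hc'
    omega)]

/-- Interpolation: if the column heights are constant on `(u, v]` and the inequality
holds at `u` and `v`, it holds in between. -/
lemma interp (S : Multiset ℕ) {u v w : ℕ} (huw : u ≤ w) (hwv : w ≤ v)
    (hconst : ∀ c c', u < c → c ≤ c' → c' ≤ v → nc S c = nc S c')
    (hu : colSum S u ≤ topSum S u) (hv : colSum S v ≤ topSum S v) :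
    colSum S w ≤ topSum S w := by
  rcases eq_or_lt_of_le huw with rfl | huw'
  · exact hu
  have hv1 : u < v := lt_of_lt_of_le huw' hwv
  set nstar := nc S v with hnstar
  by_cases hcase : nstar ≤ sig S w
  · -- go down to u
    have hdown : ∑ c ∈ Finset.Icc (u+1) w, nc S c ≤ ∑ c ∈ Finset.Icc (u+1) w, sig S c := by
      apply Finset.sum_le_sum
      intro c hc
      simp only [Finset.mem_Icc] at hc
      have h1 : nc S c = nstar := hconst c v hc.1 (le_trans hc.2 hwv) le_rfl
      have h2 : sig S w ≤ sig S c := sig_anti S hc.2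
      omega
    have e1 := topSum_interval S huw
    have e2 := colSum_interval S huw
    omega
  · -- go up to v
    push_neg at hcase
    have hup : ∑ c ∈ Finset.Icc (w+1) v, sig S c ≤ ∑ c ∈ Finset.Icc (w+1) v, nc S c := by
      apply Finset.sum_le_sum
      intro c hc
      simp only [Finset.mem_Icc] at hc
      have h1 : nc S c = nstar := hconst c v (lt_of_le_of_lt huw hc.1) hc.2 le_rfl
      have h2 : sig S c ≤ sig S w := sig_anti S (by omega)
      omega
    have e1 := topSum_interval S hwv
    have e2 := colSum_interval S hwv
    omega

section Diagram

lemma colSum_finsum (I : Finset ℕ) (g : ℕ → Multiset ℕ) (w : ℕ) :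
    colSum (∑ t ∈ I, g t) w = ∑ t ∈ I, colSum (g t) w := by
  simp only [colSum_eq_sum_nc]
  rw [Finset.sum_comm]
  apply Finset.sum_congr rfl
  intro c _
  induction I using Finset.induction with
  | empty => simp [nc_zero]
  | insert _ _ hni ih =>
    rw [Finset.sum_insert hni, Finset.sum_insert hni, nc_add, ih]

lemma nc_finsum (I : Finset ℕ) (g : ℕ → Multiset ℕ) (c : ℕ) :
    nc (∑ t ∈ I, g t) c = ∑ t ∈ I, nc (g t) c := by
  induction I using Finset.induction with
  | empty => simp [nc_zero]
  | insert _ _ hni ih =>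
    rw [Finset.sum_insert hni, Finset.sum_insert hni, nc_add, ih]

lemma card_finsum (I : Finset ℕ) (g : ℕ → Multiset ℕ) :
    Multiset.card (∑ t ∈ I, g t) = ∑ t ∈ I, Multiset.card (g t) := by
  induction I using Finset.induction with
  | empty => simp
  | insert _ _ hni ih =>
    rw [Finset.sum_insert hni, Finset.sum_insert hni, Multiset.card_add, ih]

lemma sum_finsum (I : Finset ℕ) (g : ℕ → Multiset ℕ) :
    (∑ t ∈ I, g t).sum = ∑ t ∈ I, (g t).sum := by
  induction I using Finset.induction with
  | empty => simp
  | insert _ _ hni ih =>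
    rw [Finset.sum_insert hni, Finset.sum_insert hni, Multiset.sum_add, ih]

lemma nc_replicateX (n x c : ℕ) : nc (Multiset.replicate n x) c = if c ≤ x then n else 0 := by
  induction n with
  | zero => simp [nc_zero]
  | succ n ih =>
    rw [Multiset.replicate_succ, nc_cons, ih]
    split <;> omega

lemma colSum_replicate (n x w : ℕ) : colSum (Multiset.replicate n x) w = n * min x w := by
  rw [colSum_eq_sum_nc]
  have : ∀ c, nc (Multiset.replicate n x) c = n * (if c ≤ x then 1 else 0) := by
    intro c
    rw [nc_replicateX]
    split <;> simp
  rw [Finset.sum_congr rfl (fun c _ => this c), ← Finset.mul_sum]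
  congr 1
  rw [Finset.sum_ite, Finset.sum_const, Finset.sum_const]
  have : (Finset.Icc 1 w).filter (fun c => c ≤ x) = Finset.Icc 1 (min x w) := by
    ext c; simp only [Finset.mem_filter, Finset.mem_Icc]; omega
  simp [this]

lemma nc_replicate (n x c : ℕ) : nc (Multiset.replicate n x) c = if c ≤ x then n else 0 :=
  nc_replicateX n x c

lemma colSum_rowMultiset (k : ℕ) (a f : ℕ → ℕ) (w : ℕ) :
    colSum (rowMultiset k a f) w = ∑ t ∈ Finset.Icc 1 k, f t * min (a t) w := by
  rw [rowMultiset, colSum_finsum]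
  exact Finset.sum_congr rfl (fun t _ => colSum_replicate _ _ _)

lemma card_rowMultiset (k : ℕ) (a f : ℕ → ℕ) :
    Multiset.card (rowMultiset k a f) = ∑ t ∈ Finset.Icc 1 k, f t := by
  rw [rowMultiset, card_finsum]
  simp [Multiset.card_replicate]

lemma sum_rowMultiset (k : ℕ) (a f : ℕ → ℕ) :
    (rowMultiset k a f).sum = ∑ t ∈ Finset.Icc 1 k, f t * a t := by
  rw [rowMultiset, sum_finsum]
  apply Finset.sum_congr rfl
  intro t _
  rw [Multiset.sum_replicate, smul_eq_mul]

lemma nc_rowMultiset (k : ℕ) (a f : ℕ → ℕ) (c : ℕ) :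
    nc (rowMultiset k a f) c = ∑ t ∈ Finset.Icc 1 k, (if c ≤ a t then f t else 0) := by
  rw [rowMultiset, nc_finsum]
  exact Finset.sum_congr rfl (fun t _ => nc_replicate _ _ _)

end Diagram

section Suffix

lemma sum_Icc_split {M : Type*} [AddCommMonoid M] (g : ℕ → M) {lo mid hi : ℕ} (h1 : lo ≤ mid) (h0 : 1 ≤ mid) (h2 : mid ≤ hi + 1) :
    ∑ c ∈ Finset.Icc lo hi, g c
      = ∑ c ∈ Finset.Icc lo (mid-1), g c + ∑ c ∈ Finset.Icc mid hi, g c := by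
  have : Finset.Icc lo hi = Finset.Icc lo (mid-1) ∪ Finset.Icc mid hi := by
    ext c; simp only [Finset.mem_Icc, Finset.mem_union]; omega
  rw [this, Finset.sum_union]
  rw [Finset.disjoint_left]
  intro c hc hc'
  simp only [Finset.mem_Icc] at hc hc'
  omega

variable {p : ℕ} {a e : ℕ → ℕ}
  (ha1 : 0 < a 1)
  (hmono : ∀ i, 1 ≤ i → i < p → a i < a (i + 1))
  (he : ∀ i, 1 ≤ i → i ≤ p → 0 < e i)
  (H1 : ∀ k, 1 ≤ k → k ≤ p → ∑ i ∈ Finset.Icc 1 k, e i ≤ a k)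
  (H2 : ∀ j k i, 1 ≤ j → j < k → k ≤ p → 2 ≤ i → i ≤ k →
          (∑ t ∈ Finset.Icc i k, e t) < a j → a j ≤ (∑ t ∈ Finset.Icc (i-1) k, e t) →
          (∑ t ∈ Finset.Icc 1 (j - 1), a t * e t) + a j * ∑ t ∈ Finset.Icc j k, e t ≤
            (∑ t ∈ Finset.Icc i k, e t * a t) + (a j - ∑ t ∈ Finset.Icc i k, e t) * a (i - 1))

include hmono in
lemma a_mono : ∀ s t, 1 ≤ s → s ≤ t → t ≤ p → a s ≤ a t := by
  intro s t h1 h2 h3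
  induction t, h2 using Nat.le_induction with
  | base => exact le_rfl
  | succ t ht ih =>
    have : a t < a (t+1) := hmono t (by omega) (by omega)
    have := ih (by omega)
    omega

include hmono in
lemma a_strict : ∀ s t, 1 ≤ s → s < t → t ≤ p → a s < a t := by
  intro s t h1 h2 h3
  have h4 : a s ≤ a (t-1) := a_mono hmono s (t-1) h1 (by omega) (by omega)
  have h5 : a (t-1) < a (t-1+1) := hmono (t-1) (by omega) (by omega)
  have h6 : a (t-1+1) = a t := by rw [show t-1+1 = t by omega]
  omega

include ha1 hmono in
lemma a_pos : ∀ t, 1 ≤ t → t ≤ p → 1 ≤ a t := by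
  intro t h1 h2
  have := a_mono hmono 1 t le_rfl h1 h2
  omega

include hmono in
lemma colSum_tail_eq (k m : ℕ) (hk : k ≤ p) (hm1 : 1 ≤ m) (hmk : m ≤ k) :
    colSum (rowMultiset k a e) (a m)
      = (∑ t ∈ Finset.Icc 1 (m-1), a t * e t) + a m * ∑ t ∈ Finset.Icc m k, e t := by
  rw [colSum_rowMultiset]
  rw [sum_Icc_split _ (le_refl 1 |>.trans hm1) hm1 (by omega)]
  congr 1
  · apply Finset.sum_congr rfl
    intro t ht
    simp only [Finset.mem_Icc] at ht
    have : a t ≤ a m := a_mono hmono t m ht.1 (by omega) (by omega)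
    rw [min_eq_left this, mul_comm]
  · rw [Finset.mul_sum]
    apply Finset.sum_congr rfl
    intro t ht
    simp only [Finset.mem_Icc] at ht
    have : a m ≤ a t := a_mono hmono m t hm1 ht.1 (by omega)
    rw [min_eq_right this, mul_comm]

omit ha1 hmono he H1 H2 in
lemma replicate_le_tail {k t n : ℕ} (h1 : 1 ≤ t) (h2 : t ≤ k) (hn : n ≤ e t) :
    Multiset.replicate n (a t) ≤ rowMultiset k a e := by
  have h3 : Multiset.replicate n (a t) ≤ Multiset.replicate (e t) (a t) :=
    Multiset.replicate_le_replicate (a t) |>.2 hn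
  refine le_trans h3 ?_
  apply Finset.single_le_sum (f := fun t => Multiset.replicate (e t) (a t))
  · intro i _
    exact Multiset.zero_le _
  · simp only [Finset.mem_Icc]; omega

include ha1 hmono he H1 H2 in
set_option linter.unusedSectionVars false in
lemma suffix_base (k m : ℕ) (hk1 : 1 ≤ k) (hkp : k ≤ p) (hm1 : 1 ≤ m) (hmk : m ≤ k) :
    colSum (rowMultiset k a e) (a m) ≤ topSum (rowMultiset k a e) (a m) := by
  set S := rowMultiset k a e with hS
  set N := ∑ t ∈ Finset.Icc 1 k, e t with hN
  have hcard : Multiset.card S = N := card_rowMultiset k a e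
  by_cases hNm : N ≤ a m
  · rw [topSum_eq_sum_of_card_le (by omega)]
    exact colSum_le_sum S (a m)
  push_neg at hNm
  -- N > a m; find the cut index i
  have hmp : m ≤ p := le_trans hmk hkp
  have ham : 1 ≤ a m := a_pos ha1 hmono m hm1 hmp
  have hNk : N ≤ a k := H1 k hk1 hkp
  have hmk' : m < k := by
    by_contra h
    push_neg at h
    have : m = k := le_antisymm hmk h
    subst this
    omega
  set F := (Finset.Icc 2 (k+1)).filter (fun i => (∑ t ∈ Finset.Icc i k, e t) < a m) with hF
  have hFne : F.Nonempty := by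
    refine ⟨k+1, ?_⟩
    simp only [hF, Finset.mem_filter, Finset.mem_Icc]
    constructor
    · omega
    · rw [Finset.Icc_eq_empty (by omega)]
      simpa using Nat.lt_of_lt_of_le Nat.zero_lt_one ham
  set i := F.min' hFne with hi
  have hiF : i ∈ F := F.min'_mem hFne
  simp only [hF, Finset.mem_filter, Finset.mem_Icc] at hiF
  obtain ⟨⟨hi2, hik1⟩, hilt⟩ := hiF
  have hige : a m ≤ ∑ t ∈ Finset.Icc (i-1) k, e t := by
    rcases Nat.eq_or_lt_of_le hi2 with h | h
    · -- i = 2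
      have : i - 1 = 1 := by omega
      rw [this]
      omega
    · -- i ≥ 3 : minimality of i
      by_contra hcon
      push_neg at hcon
      have : i - 1 ∈ F := by
        simp only [hF, Finset.mem_filter, Finset.mem_Icc]
        omega
      have := F.min'_le _ this
      omega
  by_cases hike : i ≤ k
  · -- main case: use H2
    have h2 := H2 m k i hm1 hmk' hkp hi2 hike hilt hige
    have hcol : colSum S (a m)
        = (∑ t ∈ Finset.Icc 1 (m-1), a t * e t) + a m * ∑ t ∈ Finset.Icc m k, e t :=
      colSum_tail_eq hmono k m hkp hm1 hmk
    set T := (∑ t ∈ Finset.Icc i k, Multiset.replicate (e t) (a t))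
        + Multiset.replicate (a m - ∑ t ∈ Finset.Icc i k, e t) (a (i-1)) with hT
    have hTcard : Multiset.card T = a m := by
      rw [hT, Multiset.card_add, card_finsum]
      simp only [Multiset.card_replicate]
      omega
    have hTsum : T.sum = (∑ t ∈ Finset.Icc i k, e t * a t)
        + (a m - ∑ t ∈ Finset.Icc i k, e t) * a (i-1) := by
      rw [hT, Multiset.sum_add, sum_finsum, Multiset.sum_replicate, smul_eq_mul]
      congr 1
      apply Finset.sum_congr rfl
      intro t _
      rw [Multiset.sum_replicate, smul_eq_mul]
    have hTle : T ≤ S := by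
      rw [hT, hS]
      have hsplit : rowMultiset k a e
          = (∑ t ∈ Finset.Icc i k, Multiset.replicate (e t) (a t))
            + ∑ t ∈ Finset.Icc 1 (i-1), Multiset.replicate (e t) (a t) := by
        rw [rowMultiset, sum_Icc_split (fun t => Multiset.replicate (e t) (a t))
          (by omega : 1 ≤ i) (by omega) (by omega), add_comm]
      rw [hsplit]
      apply add_le_add le_rfl
      have h1 : Multiset.replicate (a m - ∑ t ∈ Finset.Icc i k, e t) (a (i-1))
          ≤ Multiset.replicate (e (i-1)) (a (i-1)) := by
        apply (Multiset.replicate_le_replicate (a (i-1))).2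
        have hsplit2 : ∑ t ∈ Finset.Icc (i-1) k, e t = e (i-1) + ∑ t ∈ Finset.Icc i k, e t := by
          rw [sum_Icc_split e (by omega : i - 1 ≤ i) (by omega) (by omega)]
          congr 1
          · rw [show i - 1 = i - 1 by rfl]
            have : Finset.Icc (i-1) (i-1) = {i-1} := Finset.Icc_self _
            rw [this, Finset.sum_singleton]
        omega
      refine le_trans h1 ?_
      apply Finset.single_le_sum (f := fun t => Multiset.replicate (e t) (a t))
      · intro t _
        exact Multiset.zero_le _
      · simp only [Finset.mem_Icc]
        omega
    have := sum_le_topSum hTle (le_of_eq hTcard)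
    omega
  · -- i = k+1 : use H1
    have hik1' : i = k + 1 := by omega
    have hek : a m ≤ e k := by
      rw [hik1', show k + 1 - 1 = k from rfl] at hige
      rwa [Finset.Icc_self, Finset.sum_singleton] at hige
    set T := Multiset.replicate (a m) (a k) with hT
    have hTle : T ≤ S := replicate_le_tail hk1 le_rfl hek
    have hTcard : Multiset.card T = a m := Multiset.card_replicate _ _
    have hTsum : T.sum = a m * a k := by
      rw [hT, Multiset.sum_replicate, smul_eq_mul]
    have htop := sum_le_topSum hTle (le_of_eq hTcard)
    have hcol : colSum S (a m) ≤ a m * a k := by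
      rw [hS, colSum_rowMultiset]
      calc ∑ t ∈ Finset.Icc 1 k, e t * min (a t) (a m)
          ≤ ∑ t ∈ Finset.Icc 1 k, e t * a m := by
            apply Finset.sum_le_sum
            intro t _
            exact Nat.mul_le_mul_left _ (min_le_right _ _)
        _ = N * a m := by rw [← Finset.sum_mul]
        _ ≤ a k * a m := Nat.mul_le_mul_right _ hNk
        _ = a m * a k := mul_comm _ _
    omega

include ha1 hmono he H1 in
lemma suffix_base1 (k : ℕ) (hk1 : 1 ≤ k) (hkp : k ≤ p) :
    colSum (rowMultiset k a e) 1 ≤ topSum (rowMultiset k a e) 1 := by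
  have hak : 1 ≤ a k := a_pos ha1 hmono k hk1 hkp
  have hcol : colSum (rowMultiset k a e) 1 ≤ ∑ t ∈ Finset.Icc 1 k, e t := by
    rw [colSum_rowMultiset]
    apply Finset.sum_le_sum
    intro t _
    have : min (a t) 1 ≤ 1 := min_le_right _ _
    calc e t * min (a t) 1 ≤ e t * 1 := Nat.mul_le_mul_left _ this
      _ = e t := mul_one _
  have hek : (1 : ℕ) ≤ e k := he k hk1 hkp
  have hT : Multiset.replicate 1 (a k) ≤ rowMultiset k a e :=
    replicate_le_tail hk1 le_rfl hek
  have htop := sum_le_topSum hT (le_of_eq (Multiset.card_replicate _ _))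
  rw [Multiset.sum_replicate, smul_eq_mul, one_mul] at htop
  have := H1 k hk1 hkp
  omega

include ha1 hmono he H1 H2 in
lemma suffix_ok (k : ℕ) (hk1 : 1 ≤ k) (hkp : k ≤ p) (w : ℕ) (hw : 1 ≤ w) :
    colSum (rowMultiset k a e) w ≤ topSum (rowMultiset k a e) w := by
  set S := rowMultiset k a e with hS
  set N := ∑ t ∈ Finset.Icc 1 k, e t with hN
  have hcard : Multiset.card S = N := card_rowMultiset k a e
  by_cases hNw : N ≤ w
  · rw [topSum_eq_sum_of_card_le (by omega)]
    exact colSum_le_sum S w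
  push_neg at hNw
  have hNk : N ≤ a k := H1 k hk1 hkp
  have hwak : w < a k := by omega
  by_cases hwa1 : w < a 1
  · -- interpolate on [1, a 1]
    apply interp S hw (le_of_lt hwa1)
    · intro c c' hc hcc' hc'
      rw [hS, nc_rowMultiset, nc_rowMultiset]
      apply Finset.sum_congr rfl
      intro t ht
      simp only [Finset.mem_Icc] at ht
      have : a 1 ≤ a t := a_mono hmono 1 t le_rfl ht.1 (le_trans ht.2 hkp)
      have h1 : c ≤ a t := by omega
      have h2 : c' ≤ a t := by omega
      simp [h1, h2]
    · exact suffix_base1 ha1 hmono he H1 k hk1 hkp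
    · have := suffix_base ha1 hmono he H1 H2 k 1 hk1 hkp le_rfl hk1
      exact this
  · push_neg at hwa1
    -- find j
    set F := (Finset.Icc 1 k).filter (fun t => a t ≤ w) with hF
    have hFne : F.Nonempty := by
      refine ⟨1, ?_⟩
      simp only [hF, Finset.mem_filter, Finset.mem_Icc]
      omega
    set j := F.max' hFne with hj
    have hjF : j ∈ F := F.max'_mem hFne
    simp only [hF, Finset.mem_filter, Finset.mem_Icc] at hjF
    obtain ⟨⟨hj1, hjk⟩, hjw⟩ := hjF
    have hjlt : j < k := by
      by_contra h
      push_neg at h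
      have hjeq : j = k := le_antisymm hjk h
      rw [hjeq] at hjw
      omega
    have hj1w : w < a (j+1) := by
      by_contra h
      push_neg at h
      have : j + 1 ∈ F := by
        simp only [hF, Finset.mem_filter, Finset.mem_Icc]
        omega
      have := F.le_max' _ this
      omega
    apply interp S hjw (le_of_lt hj1w)
    · intro c c' hc hcc' hc'
      rw [hS, nc_rowMultiset, nc_rowMultiset]
      apply Finset.sum_congr rfl
      intro t ht
      simp only [Finset.mem_Icc] at ht
      by_cases htj : t ≤ j
      · have : a t ≤ a j := a_mono hmono t j ht.1 htj (by omega)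
        have h1 : ¬ (c ≤ a t) := by omega
        have h2 : ¬ (c' ≤ a t) := by omega
        simp [h1, h2]
      · push_neg at htj
        have : a (j+1) ≤ a t := a_mono hmono (j+1) t (by omega) htj (le_trans ht.2 hkp)
        have h1 : c ≤ a t := by omega
        have h2 : c' ≤ a t := by omega
        simp [h1, h2]
    · exact suffix_base ha1 hmono he H1 H2 k j hk1 hkp hj1 hjk
    · exact suffix_base ha1 hmono he H1 H2 k (j+1) hk1 hkp (by omega) (by omega)

end Suffix

section Backward

variable {p : ℕ} {a e : ℕ → ℕ}
  (ha1 : 0 < a 1)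
  (hmono : ∀ i, 1 ≤ i → i < p → a i < a (i + 1))
  (he : ∀ i, 1 ≤ i → i ≤ p → 0 < e i)
  (H1 : ∀ k, 1 ≤ k → k ≤ p → ∑ i ∈ Finset.Icc 1 k, e i ≤ a k)
  (H2 : ∀ j k i, 1 ≤ j → j < k → k ≤ p → 2 ≤ i → i ≤ k →
          (∑ t ∈ Finset.Icc i k, e t) < a j → a j ≤ (∑ t ∈ Finset.Icc (i-1) k, e t) →
          (∑ t ∈ Finset.Icc 1 (j - 1), a t * e t) + a j * ∑ t ∈ Finset.Icc j k, e t ≤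
            (∑ t ∈ Finset.Icc i k, e t * a t) + (a j - ∑ t ∈ Finset.Icc i k, e t) * a (i - 1))

omit ha1 hmono he H1 H2 in
lemma rowMultiset_update_succ (f : ℕ → ℕ) {t1 : ℕ} (h1 : 1 ≤ t1) (h2 : t1 ≤ p) :
    rowMultiset p a (Function.update f t1 (f t1 + 1)) = a t1 ::ₘ rowMultiset p a f := by
  have ht1 : t1 ∈ Finset.Icc 1 p := by simp only [Finset.mem_Icc]; omega
  rw [rowMultiset, rowMultiset]
  rw [← Finset.add_sum_erase _ _ ht1, ← Finset.add_sum_erase _ _ ht1]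
  rw [Function.update_self, Multiset.replicate_succ, Multiset.cons_add]
  congr 1
  congr 1
  apply Finset.sum_congr rfl
  intro t ht
  rw [Function.update_of_ne (Finset.ne_of_mem_erase ht)]

omit ha1 hmono he H1 H2 in
lemma colSum_cons (y : ℕ) (S : Multiset ℕ) (w : ℕ) :
    colSum (y ::ₘ S) w = colSum S w + min y w := by
  rw [colSum_eq_sum_nc, colSum_eq_sum_nc]
  have : ∀ c, nc (y ::ₘ S) c = nc S c + (if c ≤ y then 1 else 0) := fun c => nc_cons y S c
  rw [Finset.sum_congr rfl (fun c _ => this c), Finset.sum_add_distrib]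
  congr 1
  rw [Finset.sum_ite, Finset.sum_const, Finset.sum_const]
  have : (Finset.Icc 1 w).filter (fun c => c ≤ y) = Finset.Icc 1 (min y w) := by
    ext c; simp only [Finset.mem_filter, Finset.mem_Icc]; omega
  simp [this]

/-- The measure for the main induction. -/
def bmeasure (p : ℕ) (a e f : ℕ → ℕ) (w : ℕ) : ℕ :=
  ∑ t ∈ Finset.Icc 1 p, ((e t - f t) + f t * (if w < a t then 2 + a t else 0))

include ha1 hmono he H1 H2 in
lemma bwd_main : ∀ N (f : ℕ → ℕ), (∀ t, 1 ≤ t → t ≤ p → f t ≤ e t) → ∀ w, 1 ≤ w →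
    bmeasure p a e f w ≤ N →
    colSum (rowMultiset p a f) w ≤ topSum (rowMultiset p a f) w := by
  intro N
  induction N using Nat.strong_induction_on with
  | _ N ih =>
  intro f hfe w hw hmeas
  set S := rowMultiset p a f with hSdef
  set n := ∑ t ∈ Finset.Icc 1 p, f t with hn
  have hcard : Multiset.card S = n := card_rowMultiset p a f
  by_cases hnw : n ≤ w
  · rw [topSum_eq_sum_of_card_le (by omega)]
    exact colSum_le_sum S w
  push_neg at hnw
  -- find the largest present block
  set F := (Finset.Icc 1 p).filter (fun t => f t ≠ 0) with hF
  have hFne : F.Nonempty := by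
    by_contra hcon
    rw [Finset.not_nonempty_iff_eq_empty] at hcon
    have : n = 0 := by
      rw [hn]
      apply Finset.sum_eq_zero
      intro t ht
      by_contra hft
      have : t ∈ F := by
        simp only [hF, Finset.mem_filter]
        exact ⟨ht, hft⟩
      rw [hcon] at this
      simp at this
    omega
  set khat := F.max' hFne with hkhat
  have hkF : khat ∈ F := F.max'_mem hFne
  simp only [hF, Finset.mem_filter, Finset.mem_Icc] at hkF
  obtain ⟨⟨hk1, hkp⟩, hfk⟩ := hkF
  have hkmax : ∀ t, 1 ≤ t → t ≤ p → f t ≠ 0 → t ≤ khat := by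
    intro t h1 h2 h3
    apply F.le_max'
    simp only [hF, Finset.mem_filter, Finset.mem_Icc]
    exact ⟨⟨h1, h2⟩, h3⟩
  have hnk : n ≤ a khat := by
    have hzero : ∀ t ∈ Finset.Icc 1 p, t ∉ Finset.Icc 1 khat → f t = 0 := by
      intro t ht hnt
      simp only [Finset.mem_Icc] at ht hnt
      by_contra h
      have := hkmax t ht.1 ht.2 h
      omega
    have : ∑ t ∈ Finset.Icc 1 khat, f t = n := by
      rw [hn]
      exact Finset.sum_subset (Finset.Icc_subset_Icc_right hkp) hzero
    have hle : ∑ t ∈ Finset.Icc 1 khat, f t ≤ ∑ t ∈ Finset.Icc 1 khat, e t := by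
      apply Finset.sum_le_sum
      intro t ht
      simp only [Finset.mem_Icc] at ht
      exact hfe t ht.1 (le_trans ht.2 hkp)
    have := H1 khat hk1 hkp
    omega
  have hwk : w < a khat := by omega
  by_cases hcase1 : ∃ t1, 1 ≤ t1 ∧ t1 ≤ p ∧ f t1 < e t1 ∧ a t1 ≤ w
  · -- add a short row
    obtain ⟨t1, ht11, ht1p, ht1f, ht1w⟩ := hcase1
    set f' := Function.update f t1 (f t1 + 1) with hf'
    have hf'e : ∀ t, 1 ≤ t → t ≤ p → f' t ≤ e t := by
      intro t h1 h2
      by_cases h : t = t1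
      · subst h
        rw [hf', Function.update_self]
        omega
      · rw [hf', Function.update_of_ne h]
        exact hfe t h1 h2
    have hmeas' : bmeasure p a e f' w + 1 ≤ bmeasure p a e f w := by
      have ht1m : t1 ∈ Finset.Icc 1 p := by simp only [Finset.mem_Icc]; omega
      rw [bmeasure, bmeasure,
        ← Finset.add_sum_erase _ _ ht1m, ← Finset.add_sum_erase _ _ ht1m]
      have hsame : ∑ t ∈ (Finset.Icc 1 p).erase t1,
            ((e t - f' t) + f' t * (if w < a t then 2 + a t else 0))
          = ∑ t ∈ (Finset.Icc 1 p).erase t1,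
            ((e t - f t) + f t * (if w < a t then 2 + a t else 0)) := by
        apply Finset.sum_congr rfl
        intro t ht
        rw [hf', Function.update_of_ne (Finset.ne_of_mem_erase ht)]
      rw [hsame]
      have h1 : f' t1 = f t1 + 1 := by rw [hf', Function.update_self]
      have h2 : ¬ (w < a t1) := by omega
      simp only [h1, h2, if_false, mul_zero]
      omega
    have hcons : rowMultiset p a f' = a t1 ::ₘ S :=
      rowMultiset_update_succ f ht11 ht1p
    have hIH := ih (N - 1) (by omega) f' hf'e w hw (by omega)
    rw [hcons, colSum_cons] at hIH
    have htc := topSum_cons (a t1) S hw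
    have hminyw : min (a t1) w = a t1 := min_eq_left ht1w
    omega
  · -- all short blocks are full
    push_neg at hcase1
    set sg := sig S w with hsg
    by_cases hcase2 : ∃ t0, 1 ≤ t0 ∧ t0 ≤ khat ∧ f t0 < e t0 ∧ sg + w < a t0
    · -- remove the top row
      obtain ⟨t0, ht01, ht0k, ht0f, ht0s⟩ := hcase2
      have hat0 : a t0 ≤ a khat := a_mono hmono t0 khat ht01 ht0k hkp
      set f' := Function.update f khat (f khat - 1) with hf'
      have hf'e : ∀ t, 1 ≤ t → t ≤ p → f' t ≤ e t := by
        intro t h1 h2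
        by_cases h : t = khat
        · subst h
          rw [hf', Function.update_self]
          have := hfe khat h1 h2
          omega
        · rw [hf', Function.update_of_ne h]
          exact hfe t h1 h2
      have hcons : S = a khat ::ₘ rowMultiset p a f' := by
        have : f = Function.update f' khat (f' khat + 1) := by
          funext t
          by_cases h : t = khat
          · subst h
            rw [Function.update_self, hf', Function.update_self]
            omega
          · rw [Function.update_of_ne h, hf', Function.update_of_ne h]
        rw [hSdef]
        conv_lhs => rw [this]
        exact rowMultiset_update_succ f' hk1 hkp
      have hmeas' : bmeasure p a e f' w + 1 ≤ bmeasure p a e f w := by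
        have hkm : khat ∈ Finset.Icc 1 p := by simp only [Finset.mem_Icc]; omega
        rw [bmeasure, bmeasure,
          ← Finset.add_sum_erase _ _ hkm, ← Finset.add_sum_erase _ _ hkm]
        have hsame : ∑ t ∈ (Finset.Icc 1 p).erase khat,
              ((e t - f' t) + f' t * (if w < a t then 2 + a t else 0))
            = ∑ t ∈ (Finset.Icc 1 p).erase khat,
              ((e t - f t) + f t * (if w < a t then 2 + a t else 0)) := by
          apply Finset.sum_congr rfl
          intro t ht
          rw [hf', Function.update_of_ne (Finset.ne_of_mem_erase ht)]
        rw [hsame]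
        have h1 : f' khat = f khat - 1 := by rw [hf', Function.update_self]
        have h2 : w < a khat := hwk
        have h3 := hfe khat hk1 hkp
        simp only [h1, h2, if_true]
        have hfk1 : 1 ≤ f khat := by omega
        have hY : (f khat - 1) * (2 + a khat) = f khat * (2 + a khat) - (2 + a khat) :=
          Nat.sub_one_mul _ _
        have hX : (2 + a khat) ≤ f khat * (2 + a khat) :=
          Nat.le_mul_of_pos_left _ (by omega)
        omega
      have hIH := ih (N - 1) (by omega) f' hf'e w hw (by omega)
      set S' := rowMultiset p a f' with hS'def
      have htc := topSum_cons (a khat) S' hw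
      rw [← hcons] at htc
      have hsig' : sig S' w ≤ sg := by
        rw [hsg, hcons]
        exact sig_cons_mono _ _ _
      have hcol : colSum S w = colSum S' w + min (a khat) w := by
        rw [hcons, colSum_cons]
      have hminw : min (a khat) w = w := min_eq_right (le_of_lt hwk)
      have hminx : min (a khat) (sig S' w) ≤ sg := le_trans (min_le_right _ _) hsig'
      omega
    · -- jump to the full tail diagram
      push_neg at hcase2
      set A := ∑ t ∈ Finset.Icc 1 khat, Multiset.replicate (e t - f t) (a t) with hA
      have hYA : rowMultiset khat a e = S + A := by
        have hS2 : S = ∑ t ∈ Finset.Icc 1 khat, Multiset.replicate (f t) (a t) := by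
          rw [hSdef, rowMultiset]
          symm
          apply Finset.sum_subset (Finset.Icc_subset_Icc_right hkp)
          intro t ht hnt
          simp only [Finset.mem_Icc] at ht hnt
          have : f t = 0 := by
            by_contra h
            have := hkmax t ht.1 ht.2 h
            omega
          rw [this]
          rfl
        rw [hS2, hA, rowMultiset, ← Finset.sum_add_distrib]
        apply Finset.sum_congr rfl
        intro t ht
        simp only [Finset.mem_Icc] at ht
        rw [← Multiset.replicate_add]
        congr 1
        have := hfe t ht.1 (le_trans ht.2 hkp)
        omega
      have hsuf := suffix_ok ha1 hmono he H1 H2 khat hk1 hkp w hw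
      rw [hYA] at hsuf
      have hcolA : colSum A w = ∑ t ∈ Finset.Icc 1 khat, (e t - f t) * w := by
        rw [hA, colSum_finsum]
        apply Finset.sum_congr rfl
        intro t ht
        simp only [Finset.mem_Icc] at ht
        rw [colSum_replicate]
        by_cases h : f t = e t
        · rw [h]
          simp
        · have hfl : f t < e t := lt_of_le_of_ne (hfe t ht.1 (le_trans ht.2 hkp)) h
          have haw : ¬ (a t ≤ w) := by
            intro hc
            have := hcase1 t ht.1 (le_trans ht.2 hkp)
            omega
          push_neg at haw
          rw [min_eq_right (le_of_lt haw)]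
      have htop := topSum_add_multi S A hw
      have hmapA : (A.map (fun y => y - sig S w)).sum
          ≤ ∑ t ∈ Finset.Icc 1 khat, (e t - f t) * w := by
        rw [hA]
        have : (∑ t ∈ Finset.Icc 1 khat, Multiset.replicate (e t - f t) (a t)).map
              (fun y => y - sig S w)
            = ∑ t ∈ Finset.Icc 1 khat, Multiset.replicate (e t - f t) (a t - sig S w) := by
          induction (Finset.Icc 1 khat) using Finset.induction with
          | empty => simp
          | insert _ _ hni ih2 =>
            rw [Finset.sum_insert hni, Finset.sum_insert hni, Multiset.map_add, ih2,
              Multiset.map_replicate]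
        rw [this, sum_finsum]
        apply Finset.sum_le_sum
        intro t ht
        simp only [Finset.mem_Icc] at ht
        rw [Multiset.sum_replicate, smul_eq_mul]
        by_cases h : f t = e t
        · rw [h]
          simp
        · have hfl : f t < e t := lt_of_le_of_ne (hfe t ht.1 (le_trans ht.2 hkp)) h
          have := hcase2 t ht.1 ht.2 hfl
          apply Nat.mul_le_mul_left
          omega
      have hcolsum : colSum (S + A) w = colSum S w + colSum A w := by
        rw [colSum_eq_sum_nc, colSum_eq_sum_nc, colSum_eq_sum_nc, ← Finset.sum_add_distrib]
        apply Finset.sum_congr rfl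
        intro c _
        rw [nc_add]
      omega

end Backward

section Glue

variable {p : ℕ} {a e : ℕ → ℕ}
  (ha1 : 0 < a 1)
  (hmono : ∀ i, 1 ≤ i → i < p → a i < a (i + 1))
  (he : ∀ i, 1 ≤ i → i ≤ p → 0 < e i)

omit ha1 he in
include hmono in
lemma a_inj : ∀ s t, 1 ≤ s → s ≤ p → 1 ≤ t → t ≤ p → a s = a t → s = t := by
  intro s t hs1 hsp ht1 htp h
  rcases lt_trichotomy s t with hlt | heq | hgt
  · have := a_strict hmono s t hs1 hlt htp
    omega
  · exact heq
  · have := a_strict hmono t s ht1 hgt hsp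
    omega

omit ha1 hmono he in
lemma count_rowMultiset (k : ℕ) (f : ℕ → ℕ) (x : ℕ) :
    Multiset.count x (rowMultiset k a f)
      = ∑ t ∈ Finset.Icc 1 k, if x = a t then f t else 0 := by
  rw [rowMultiset, Multiset.count_sum']
  apply Finset.sum_congr rfl
  intro t _
  rw [Multiset.count_replicate]
  split_ifs <;> omega

include hmono in
omit ha1 he in
lemma count_rowMultiset_self {k t1 : ℕ} (f : ℕ → ℕ) (hk : k ≤ p) (h1 : 1 ≤ t1) (h2 : t1 ≤ k) :
    Multiset.count (a t1) (rowMultiset k a f) = f t1 := by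
  rw [count_rowMultiset]
  rw [Finset.sum_eq_single_of_mem t1 (by simp only [Finset.mem_Icc]; omega)]
  · simp
  · intro t ht hne
    simp only [Finset.mem_Icc] at ht
    have : ¬ (a t1 = a t) := by
      intro h
      exact hne (a_inj hmono t t1 ht.1 (le_trans ht.2 hk) h1 (le_trans h2 hk) h.symm)
    simp [this]

include hmono in
omit ha1 he in
lemma sub_of_rowMultiset {S : Multiset ℕ} (hS : S ≤ rowMultiset p a e) :
    ∃ f : ℕ → ℕ, (∀ t, 1 ≤ t → t ≤ p → f t ≤ e t) ∧ rowMultiset p a f = S := by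
  refine ⟨fun t => Multiset.count (a t) S, ?_, ?_⟩
  · intro t h1 h2
    have := Multiset.count_le_of_le (a t) hS
    rwa [count_rowMultiset_self hmono e le_rfl h1 h2] at this
  · apply Multiset.ext.2
    intro x
    rw [count_rowMultiset]
    by_cases hx : ∃ t1, 1 ≤ t1 ∧ t1 ≤ p ∧ x = a t1
    · obtain ⟨t1, h1, h2, h3⟩ := hx
      rw [Finset.sum_eq_single_of_mem t1 (by simp only [Finset.mem_Icc]; omega)]
      · simp [h3]
      · intro t ht hne
        simp only [Finset.mem_Icc] at ht
        have : ¬ (x = a t) := by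
          intro h
          rw [h3] at h
          exact hne (a_inj hmono t t1 ht.1 ht.2 h1 h2 h.symm)
        simp [this]
    · push_neg at hx
      have hxS : x ∉ S := by
        intro hmem
        have hxR : x ∈ rowMultiset p a e := Multiset.mem_of_le hS hmem
        rw [rowMultiset] at hxR
        rw [Multiset.mem_sum] at hxR
        obtain ⟨t, ht, hmem2⟩ := hxR
        simp only [Finset.mem_Icc] at ht
        have := Multiset.eq_of_mem_replicate hmem2
        exact (hx t ht.1 ht.2) this
      rw [Multiset.count_eq_zero_of_notMem hxS]
      apply Finset.sum_eq_zero
      intro t ht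
      simp only [Finset.mem_Icc] at ht
      have : ¬ (x = a t) := fun h => (hx t ht.1 ht.2) h
      simp [this]

include ha1 hmono he in
set_option linter.unusedSectionVars false in
lemma fwd_i (hW : Wide (rowMultiset p a e)) (k : ℕ) (hk1 : 1 ≤ k) (hkp : k ≤ p) :
    ∑ t ∈ Finset.Icc 1 k, e t ≤ a k := by
  set Y := rowMultiset k a e with hY
  have hYR : Y ≤ rowMultiset p a e := by
    rw [hY, rowMultiset, rowMultiset]
    exact Finset.sum_le_sum_of_subset (Finset.Icc_subset_Icc_right hkp)
  have hWide := hW Y hYR 1 one_pos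
  have hcol : colSum Y 1 = ∑ t ∈ Finset.Icc 1 k, e t := by
    rw [hY, colSum_rowMultiset]
    apply Finset.sum_congr rfl
    intro t ht
    simp only [Finset.mem_Icc] at ht
    have := a_pos ha1 hmono t ht.1 (le_trans ht.2 hkp)
    rw [min_eq_right (by omega), mul_one]
  have htop : topSum Y 1 ≤ a k := by
    rw [topSum_eq_sum_min Y 1 (B := Y.sum) (fun r hr => mem_le_sum hr)]
    have h1 : ∀ c ∈ Finset.Icc 1 Y.sum, min (nc Y c) 1 = if 1 ≤ nc Y c then 1 else 0 := by
      intro c _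
      split <;> omega
    rw [Finset.sum_congr rfl h1, Finset.sum_ite, Finset.sum_const, Finset.sum_const]
    simp only [smul_eq_mul, mul_one, mul_zero, add_zero]
    have hsub : (Finset.Icc 1 Y.sum).filter (fun c => 1 ≤ nc Y c) ⊆ Finset.Icc 1 (a k) := by
      intro c hc
      simp only [Finset.mem_filter, Finset.mem_Icc] at hc ⊢
      refine ⟨hc.1.1, ?_⟩
      obtain ⟨⟨hc1, hcB⟩, hnc⟩ := hc
      have : 0 < nc Y c := hnc
      rw [nc] at this
      obtain ⟨r, hr⟩ := Multiset.card_pos_iff_exists_mem.1 this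
      have hrY : r ∈ Y := Multiset.mem_of_mem_filter hr
      have hcr : c ≤ r := Multiset.of_mem_filter hr
      rw [hY, rowMultiset, Multiset.mem_sum] at hrY
      obtain ⟨t, ht, hmem⟩ := hrY
      simp only [Finset.mem_Icc] at ht
      have hra : r = a t := Multiset.eq_of_mem_replicate hmem
      have : a t ≤ a k := a_mono hmono t k ht.1 ht.2 hkp
      omega
    calc ((Finset.Icc 1 Y.sum).filter (fun c => 1 ≤ nc Y c)).card
        ≤ (Finset.Icc 1 (a k)).card := Finset.card_le_card hsub
      _ = a k := by rw [Nat.card_Icc]; omega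
  omega

include ha1 hmono he in
set_option linter.unusedSectionVars false in
lemma fwd_ii (hW : Wide (rowMultiset p a e)) (j k i : ℕ)
    (hj1 : 1 ≤ j) (hjk : j < k) (hkp : k ≤ p) (hi2 : 2 ≤ i) (hik : i ≤ k)
    (hlt : (∑ t ∈ Finset.Icc i k, e t) < a j)
    (hge : a j ≤ (∑ t ∈ Finset.Icc (i-1) k, e t)) :
    (∑ t ∈ Finset.Icc 1 (j - 1), a t * e t) + a j * ∑ t ∈ Finset.Icc j k, e t ≤
      (∑ t ∈ Finset.Icc i k, e t * a t) + (a j - ∑ t ∈ Finset.Icc i k, e t) * a (i - 1) := by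
  set Y := rowMultiset k a e with hY
  have hYR : Y ≤ rowMultiset p a e := by
    rw [hY, rowMultiset, rowMultiset]
    exact Finset.sum_le_sum_of_subset (Finset.Icc_subset_Icc_right hkp)
  have haj : 0 < a j := a_pos ha1 hmono j hj1 (by omega)
  have hWide := hW Y hYR (a j) haj
  have hcol : colSum Y (a j)
      = (∑ t ∈ Finset.Icc 1 (j-1), a t * e t) + a j * ∑ t ∈ Finset.Icc j k, e t :=
    colSum_tail_eq hmono k j hkp hj1 (by omega)
  -- upper bound for topSum
  set B := Y.sum with hB
  set se' := ∑ t ∈ Finset.Icc i k, e t with hse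
  have hi11 : 1 ≤ i - 1 := by omega
  have hi1k : i - 1 ≤ k := by omega
  have haB : ∀ t, 1 ≤ t → t ≤ k → a t ≤ B := by
    intro t h1 h2
    have h3 : Multiset.replicate 1 (a t) ≤ Y := replicate_le_tail h1 h2 (he t h1 (by omega))
    have hmem : a t ∈ Multiset.replicate 1 (a t) := by simp
    exact mem_le_sum (Multiset.mem_of_le h3 hmem)
  have hncbound : ∀ c, a (i-1) < c → nc Y c ≤ se' := by
    intro c hc
    rw [hY, nc_rowMultiset]
    rw [sum_Icc_split _ (by omega : 1 ≤ i) (by omega) (by omega)]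
    have hz : ∑ t ∈ Finset.Icc 1 (i-1), (if c ≤ a t then e t else 0) = 0 := by
      apply Finset.sum_eq_zero
      intro t ht
      simp only [Finset.mem_Icc] at ht
      have : a t ≤ a (i-1) := a_mono hmono t (i-1) ht.1 ht.2 (by omega)
      have : ¬ (c ≤ a t) := by omega
      simp [this]
    rw [hz, zero_add, hse]
    apply Finset.sum_le_sum
    intro t _
    split <;> omega
  have htop : topSum Y (a j) + se' * a (i-1)
      ≤ a (i-1) * a j + ∑ t ∈ Finset.Icc i k, e t * a t := by
    rw [topSum_eq_sum_min Y (a j) (B := B) (fun r hr => mem_le_sum hr)]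
    have hsplit : ∑ c ∈ Finset.Icc 1 B, min (nc Y c) (a j)
        = ∑ c ∈ Finset.Icc 1 (a (i-1)), min (nc Y c) (a j)
          + ∑ c ∈ Finset.Icc (a (i-1) + 1) B, min (nc Y c) (a j) := by
      rw [sum_Icc_split (fun c => min (nc Y c) (a j)) (mid := a (i-1) + 1) (by omega) (by omega)
        (by have := haB (i-1) hi11 hi1k; omega)]
      rw [Nat.add_sub_cancel]
    rw [hsplit]
    have hpart1 : ∑ c ∈ Finset.Icc 1 (a (i-1)), min (nc Y c) (a j) ≤ a (i-1) * a j := by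
      calc ∑ c ∈ Finset.Icc 1 (a (i-1)), min (nc Y c) (a j)
          ≤ ∑ c ∈ Finset.Icc 1 (a (i-1)), a j :=
            Finset.sum_le_sum (fun c _ => min_le_right _ _)
        _ = a (i-1) * a j := by
            rw [Finset.sum_const, Nat.card_Icc, smul_eq_mul, Nat.add_sub_cancel]
    have hpart2 : ∑ c ∈ Finset.Icc (a (i-1) + 1) B, min (nc Y c) (a j)
        = ∑ t ∈ Finset.Icc 1 k, e t * (a t - a (i-1)) := by
      have heq1 : ∀ c ∈ Finset.Icc (a (i-1) + 1) B, min (nc Y c) (a j) = nc Y c := by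
        intro c hc
        simp only [Finset.mem_Icc] at hc
        have := hncbound c (by omega)
        omega
      rw [Finset.sum_congr rfl heq1]
      have heq2 : ∀ c ∈ Finset.Icc (a (i-1) + 1) B, nc Y c
          = ∑ t ∈ Finset.Icc 1 k, (if c ≤ a t then e t else 0) := by
        intro c _
        rw [hY, nc_rowMultiset]
      rw [Finset.sum_congr rfl heq2, Finset.sum_comm]
      apply Finset.sum_congr rfl
      intro t ht
      simp only [Finset.mem_Icc] at ht
      rw [Finset.sum_ite, Finset.sum_const, Finset.sum_const]
      simp only [smul_eq_mul, mul_one, mul_zero, add_zero]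
      have hset : (Finset.Icc (a (i-1) + 1) B).filter (fun c => c ≤ a t)
          = Finset.Icc (a (i-1) + 1) (a t) := by
        ext c
        simp only [Finset.mem_filter, Finset.mem_Icc]
        have := haB t ht.1 ht.2
        constructor
        · rintro ⟨⟨h1, h2⟩, h3⟩; exact ⟨h1, h3⟩
        · rintro ⟨h1, h2⟩; exact ⟨⟨h1, by omega⟩, h2⟩
      rw [hset, Nat.card_Icc,
        show a t + 1 - (a (i-1) + 1) = a t - a (i-1) from by omega, mul_comm]
    rw [hpart2]
    have hpart3 : ∑ t ∈ Finset.Icc 1 k, e t * (a t - a (i-1))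
        = ∑ t ∈ Finset.Icc i k, e t * (a t - a (i-1)) := by
      rw [sum_Icc_split (fun t => e t * (a t - a (i-1))) (by omega : 1 ≤ i) (by omega)
        (by omega)]
      have : ∑ t ∈ Finset.Icc 1 (i-1), e t * (a t - a (i-1)) = 0 := by
        apply Finset.sum_eq_zero
        intro t ht
        simp only [Finset.mem_Icc] at ht
        have : a t ≤ a (i-1) := a_mono hmono t (i-1) ht.1 ht.2 (by omega)
        have : a t - a (i-1) = 0 := by omega
        rw [this, mul_zero]
      omega
    rw [hpart3]
    have hpart4 : ∑ t ∈ Finset.Icc i k, e t * (a t - a (i-1)) + se' * a (i-1)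
        = ∑ t ∈ Finset.Icc i k, e t * a t := by
      rw [hse, Finset.sum_mul, ← Finset.sum_add_distrib]
      apply Finset.sum_congr rfl
      intro t ht
      simp only [Finset.mem_Icc] at ht
      have : a (i-1) ≤ a t := a_mono hmono (i-1) t hi11 (by omega) (by omega)
      rw [← Nat.mul_add]
      congr 1
      omega
    omega
  have hfinal : (a j - se') * a (i-1) + se' * a (i-1) = a j * a (i-1) := by
    rw [← Nat.add_mul]
    congr 1
    omega
  have : a (i-1) * a j = a j * a (i-1) := mul_comm _ _
  omega

end Glue

/-- `Y(a;e)` is wide iff the two explicit families of inequalities hold. -/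
theorem wide_iff_inequalities (p : ℕ) (hp : 1 ≤ p) (a e : ℕ → ℕ)
    (ha1 : 0 < a 1)
    (hmono : ∀ i, 1 ≤ i → i < p → a i < a (i + 1))
    (he : ∀ i, 1 ≤ i → i ≤ p → 0 < e i) :
    Wide (rowMultiset p a e) ↔
      ((∀ k, 1 ≤ k → k ≤ p → ∑ i ∈ Finset.Icc 1 k, e i ≤ a k) ∧
       (∀ j k i, 1 ≤ j → j < k → k ≤ p → 2 ≤ i → i ≤ k →
          se e i k < a j → a j ≤ se e (i - 1) k →
          (∑ t ∈ Finset.Icc 1 (j - 1), a t * e t) + a j * ∑ t ∈ Finset.Icc j k, e t ≤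
            (∑ t ∈ Finset.Icc i k, e t * a t) + (a j - se e i k) * a (i - 1))) := by
  constructor
  · intro hW
    refine ⟨?_, ?_⟩
    · intro k hk1 hkp
      exact fwd_i ha1 hmono he hW k hk1 hkp
    · intro j k i hj1 hjk hkp hi2 hik hlt hge
      simp only [se] at hlt hge ⊢
      exact fwd_ii ha1 hmono he hW j k i hj1 hjk hkp hi2 hik hlt hge
  · rintro ⟨H1, H2⟩
    have H2' : ∀ j k i, 1 ≤ j → j < k → k ≤ p → 2 ≤ i → i ≤ k →
        (∑ t ∈ Finset.Icc i k, e t) < a j → a j ≤ (∑ t ∈ Finset.Icc (i-1) k, e t) →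
        (∑ t ∈ Finset.Icc 1 (j - 1), a t * e t) + a j * ∑ t ∈ Finset.Icc j k, e t ≤
          (∑ t ∈ Finset.Icc i k, e t * a t)
            + (a j - ∑ t ∈ Finset.Icc i k, e t) * a (i - 1) := by
      intro j k i h1 h2 h3 h4 h5 h6 h7
      have := H2 j k i h1 h2 h3 h4 h5 (by simpa [se] using h6) (by simpa [se] using h7)
      simpa [se] using this
    intro S hS w hw
    obtain ⟨f, hfe, hfS⟩ := sub_of_rowMultiset hmono hS
    rw [← hfS]
    exact bwd_main ha1 hmono he H1 H2' (bmeasure p a e f w) f hfe w hw le_rfl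
end

section
/- Let a_1 < a_2 < a_3 be positive integers and e_1, e_2, e_3 be positive integers, and set b_2 = a_2 - a_1 and b_3 = a_3 - a_2. If the Young diagram with e_i rows of length a_i (i = 1, 2, 3) is wide, then, as integers, max(0, a_2 e_3 - b_3 \cdot min(a_2, e_3)) \le min( min(a_1 e_3, a_1(a_2 - e_1 - e_2)) + min(b_2 e_3, b_2(a_2 - e_2)), (a_2 - b_3) e_3 + b_3^2 ). -/
section WideAux

lemma sort3 (a₁ a₂ a₃ e₁ e₂ e₃ : ℕ) (h12 : a₁ ≤ a₂) (h23 : a₂ ≤ a₃) :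
    Multiset.sort (Multiset.replicate e₁ a₁ + Multiset.replicate e₂ a₂ +
      Multiset.replicate e₃ a₃) (· ≤ ·) =
    List.replicate e₁ a₁ ++ List.replicate e₂ a₂ ++ List.replicate e₃ a₃ := by
  refine (fun hp h1 h2 => List.Perm.eq_of_pairwise' (r := (· ≤ · : ℕ → ℕ → Prop)) h1 h2 hp) ?_ ?_ ?_
  · apply Multiset.coe_eq_coe.mp
    rw [Multiset.sort_eq]
    simp [← Multiset.coe_replicate]
  · exact Multiset.pairwise_sort _ _
  · simp only [List.Pairwise, List.pairwise_append, List.pairwise_replicate,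
      List.mem_replicate, List.mem_append]
    refine ⟨⟨?_, ?_, ?_⟩, ?_, ?_⟩ <;> intros <;> omega

lemma topSum3 (a₁ a₂ a₃ e₁ e₂ e₃ w : ℕ) (h12 : a₁ ≤ a₂) (h23 : a₂ ≤ a₃) :
    topSum (Multiset.replicate e₁ a₁ + Multiset.replicate e₂ a₂ +
      Multiset.replicate e₃ a₃) w =
    min w e₃ * a₃ + min (w - e₃) e₂ * a₂ + min (w - e₃ - e₂) e₁ * a₁ := by
  rw [topSum, sort3 _ _ _ _ _ _ h12 h23]
  rw [List.reverse_append, List.reverse_append, List.reverse_replicate,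
    List.reverse_replicate, List.reverse_replicate]
  rw [List.take_append, List.take_append]
  simp [List.take_replicate, Nat.min_comm, Nat.mul_comm]
  ring

lemma colSumRep (a e w : ℕ) :
    (∑ c ∈ Finset.Icc 1 w, ((Multiset.replicate e a).filter (fun r => c ≤ r)).card)
      = e * min w a := by
  have h : ∀ c, ((Multiset.replicate e a).filter (fun r => c ≤ r)).card
      = if c ≤ a then e else 0 := by
    intro c
    by_cases hc : c ≤ a
    · rw [Multiset.filter_eq_self.2
        (by intro b hb; rw [Multiset.eq_of_mem_replicate hb]; exact hc)]
      simp [hc]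
    · rw [Multiset.filter_eq_nil.2
        (by intro b hb; rw [Multiset.eq_of_mem_replicate hb]; omega)]
      simp [hc]
  simp only [h]
  rw [Finset.sum_ite, Finset.sum_const, Finset.sum_const, smul_eq_mul, smul_eq_mul,
    mul_zero, add_zero]
  have : (Finset.Icc 1 w).filter (· ≤ a) = Finset.Icc 1 (min w a) := by
    ext x; simp; omega
  rw [this, Nat.card_Icc]
  simp [mul_comm]

lemma colSum3 (a₁ a₂ a₃ e₁ e₂ e₃ w : ℕ) :
    colSum (Multiset.replicate e₁ a₁ + Multiset.replicate e₂ a₂ +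
      Multiset.replicate e₃ a₃) w =
    e₁ * min w a₁ + e₂ * min w a₂ + e₃ * min w a₃ := by
  simp only [colSum, Multiset.filter_add, Multiset.card_add, Finset.sum_add_distrib,
    colSumRep]

lemma assembleAux (L X1 X2 Y1 Y2 Z : ℤ) (h0X : 0 ≤ X1) (h0X2 : 0 ≤ X2)
    (h0Y1 : 0 ≤ Y1) (h0Y2 : 0 ≤ Y2) (h0Z : 0 ≤ Z)
    (h11 : L ≤ X1 + Y1) (h12 : L ≤ X1 + Y2) (h21 : L ≤ X2 + Y1) (h22 : L ≤ X2 + Y2)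
    (hZ : L ≤ Z) : max 0 L ≤ min (min X1 X2 + min Y1 Y2) Z := by
  apply max_le
  · exact le_min (add_nonneg (le_min h0X h0X2) (le_min h0Y1 h0Y2)) h0Z
  · refine le_min ?_ hZ
    rcases min_cases X1 X2 with ⟨h,_⟩|⟨h,_⟩ <;> rcases min_cases Y1 Y2 with ⟨h',_⟩|⟨h',_⟩ <;>
      rw [h, h'] <;> assumption

end WideAux

set_option maxHeartbeats 2000000 in
theorem quad_interval_nonempty_aux (a₁ a₂ a₃ e₁ e₂ e₃ : ℕ)
    (ha1 : 0 < a₁) (ha12 : a₁ < a₂) (ha23 : a₂ < a₃)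
    (he1 : 0 < e₁) (he2 : 0 < e₂) (he3 : 0 < e₃)
    (b₂ b₃ : ℤ) (hb2 : b₂ = (a₂ : ℤ) - (a₁ : ℤ)) (hb3 : b₃ = (a₃ : ℤ) - (a₂ : ℤ))
    (hw : Wide (Multiset.replicate e₁ a₁ + Multiset.replicate e₂ a₂ +
      Multiset.replicate e₃ a₃)) :
    max 0 ((a₂ : ℤ) * (e₃ : ℤ) - b₃ * min (a₂ : ℤ) (e₃ : ℤ)) ≤
      min
        (min ((a₁ : ℤ) * (e₃ : ℤ)) ((a₁ : ℤ) * ((a₂ : ℤ) - (e₁ : ℤ) - (e₂ : ℤ))) +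
          min (b₂ * (e₃ : ℤ)) (b₂ * ((a₂ : ℤ) - (e₂ : ℤ))))
        (((a₂ : ℤ) - b₃) * (e₃ : ℤ) + b₃ ^ 2):= by
  have h12 : a₁ ≤ a₂ := ha12.le
  have h23 : a₂ ≤ a₃ := ha23.le
  set R := Multiset.replicate e₁ a₁ + Multiset.replicate e₂ a₂ + Multiset.replicate e₃ a₃
    with hR
  -- wideness consequence 1 : e₁ + e₂ + e₃ ≤ a₃
  have H1 : e₁ + e₂ + e₃ ≤ a₃ := by
    have h := hw R le_rfl 1 one_pos
    rw [hR, colSum3, topSum3 _ _ _ _ _ _ _ h12 h23,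
      show min 1 a₁ = 1 by omega, show min 1 a₂ = 1 by omega, show min 1 a₃ = 1 by omega,
      show min 1 e₃ = 1 by omega, show (1 - e₃) = 0 by omega] at h
    simp at h
    omega
  -- wideness consequence 2 : e₁ + e₂ ≤ a₂
  have H2 : e₁ + e₂ ≤ a₂ := by
    have hle : Multiset.replicate e₁ a₁ + Multiset.replicate e₂ a₂ +
        Multiset.replicate 0 a₃ ≤ R := by
      rw [Multiset.replicate_zero, add_zero, hR]
      exact self_le_add_right _ _
    have h := hw _ hle 1 one_pos
    rw [colSum3, topSum3 _ _ _ _ _ _ _ h12 h23,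
      show min 1 a₁ = 1 by omega, show min 1 a₂ = 1 by omega,
      show min 1 (0:ℕ) = 0 by omega, show (1 - (0:ℕ)) = 1 by omega,
      show min 1 e₂ = 1 by omega, show (1 - e₂) = 0 by omega] at h
    simp at h
    omega
  -- wideness consequence 3 : full diagram at width a₂
  have H3 : e₁ * a₁ + e₂ * a₂ + e₃ * a₂ ≤
      min a₂ e₃ * a₃ + min (a₂ - e₃) e₂ * a₂ + min (a₂ - e₃ - e₂) e₁ * a₁ := by
    have h := hw R le_rfl a₂ (by omega)
    rw [hR, colSum3, topSum3 _ _ _ _ _ _ _ h12 h23,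
      show min a₂ a₁ = a₁ by omega, show min a₂ a₂ = a₂ by omega,
      show min a₂ a₃ = a₂ by omega] at h
    exact h
  -- wideness consequence 4 : subdiagram without the short rows, at width a₂
  have H4 : e₂ * a₂ + e₃ * a₂ ≤ min a₂ e₃ * a₃ + min (a₂ - e₃) e₂ * a₂ := by
    have hle : Multiset.replicate 0 a₁ + Multiset.replicate e₂ a₂ +
        Multiset.replicate e₃ a₃ ≤ R := by
      rw [Multiset.replicate_zero, zero_add, hR]
      exact add_le_add (self_le_add_left _ _) le_rfl
    have h := hw _ hle a₂ (by omega)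
    rw [colSum3, topSum3 _ _ _ _ _ _ _ h12 h23,
      show min a₂ a₂ = a₂ by omega, show min a₂ a₃ = a₂ by omega,
      show min (a₂ - e₃ - e₂) 0 = 0 by omega] at h
    simp at h
    omega
  clear hw
  subst hb2 hb3
  -- global nonnegativity facts (over ℤ)
  have ca1 : (0:ℤ) < (a₁:ℤ) := by exact_mod_cast ha1
  have ca12 : (a₁:ℤ) < (a₂:ℤ) := by exact_mod_cast ha12
  have ca23 : (a₂:ℤ) < (a₃:ℤ) := by exact_mod_cast ha23
  have ce1 : (0:ℤ) < (e₁:ℤ) := by exact_mod_cast he1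
  have ce2 : (0:ℤ) < (e₂:ℤ) := by exact_mod_cast he2
  have ce3 : (0:ℤ) < (e₃:ℤ) := by exact_mod_cast he3
  have cH1 : (e₁:ℤ) + e₂ + e₃ ≤ (a₃:ℤ) := by exact_mod_cast H1
  have cH2 : (e₁:ℤ) + e₂ ≤ (a₂:ℤ) := by exact_mod_cast H2
  have h0X1 : (0:ℤ) ≤ (a₁:ℤ) * e₃ := by positivity
  have h0X2 : (0:ℤ) ≤ (a₁:ℤ) * ((a₂:ℤ) - e₁ - e₂) := by
    apply mul_nonneg ca1.le; linarith
  have h0Y1 : (0:ℤ) ≤ ((a₂:ℤ) - a₁) * e₃ := by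
    apply mul_nonneg (by linarith) ce3.le
  have h0Y2 : (0:ℤ) ≤ ((a₂:ℤ) - a₁) * ((a₂:ℤ) - e₂) := by
    apply mul_nonneg (by linarith) (by linarith)
  have hP : (0:ℤ) ≤ ((a₃:ℤ) - a₂) * e₃ := by
    apply mul_nonneg (by linarith) ce3.le
  have h0Z : (0:ℤ) ≤ ((a₂:ℤ) - ((a₃:ℤ) - a₂)) * e₃ + ((a₃:ℤ) - a₂) ^ 2 := by
    nlinarith [sq_nonneg ((a₃:ℤ) - a₂ - e₃),
      mul_nonneg ce3.le (by linarith : (0:ℤ) ≤ (a₃:ℤ) - e₃)]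
  rcases le_total e₃ a₂ with hA | hB
  · -- e₃ ≤ a₂
    rw [min_eq_right (by exact_mod_cast hA : ((e₃:ℤ) ≤ (a₂:ℤ)))]
    have hZL : (a₂:ℤ) * e₃ - ((a₃:ℤ) - a₂) * e₃ ≤
        ((a₂:ℤ) - ((a₃:ℤ) - a₂)) * e₃ + ((a₃:ℤ) - a₂) ^ 2 := by
      nlinarith [sq_nonneg ((a₃:ℤ) - a₂)]
    rcases le_total (e₂ + e₃) a₂ with h23' | h23'
    · have hQ2 : (0:ℤ) ≤ ((a₂:ℤ) - a₁) * ((a₂:ℤ) - e₂ - e₃) := by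
        apply mul_nonneg (by linarith)
        have : (e₂:ℤ) + e₃ ≤ (a₂:ℤ) := by exact_mod_cast h23'
        linarith
      rcases le_total (e₁ + e₂ + e₃) a₂ with h123 | h123
      · -- region (i)
        have hQ1 : (0:ℤ) ≤ (a₁:ℤ) * ((a₂:ℤ) - e₁ - e₂ - e₃) := by
          apply mul_nonneg ca1.le
          have : (e₁:ℤ) + e₂ + e₃ ≤ (a₂:ℤ) := by exact_mod_cast h123
          linarith
        refine assembleAux _ _ _ _ _ _ h0X1 h0X2 h0Y1 h0Y2 h0Z ?_ ?_ ?_ ?_ hZL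
        · nlinarith [hP]
        · nlinarith [hP, hQ2]
        · nlinarith [hP, hQ1]
        · nlinarith [hP, hQ1, hQ2]
      · -- region (ii)
        rw [show min a₂ e₃ = e₃ by omega, show min (a₂ - e₃) e₂ = e₂ by omega,
          show min (a₂ - e₃ - e₂) e₁ = a₂ - e₃ - e₂ by omega] at H3
        have K2 : (e₁:ℤ) * a₁ + e₂ * a₂ + e₃ * a₂ ≤
            (e₃:ℤ) * a₃ + e₂ * a₂ + ((a₂:ℤ) - e₃ - e₂) * a₁ := by
          have hc : ((a₂ - e₃ - e₂ : ℕ) : ℤ) = (a₂:ℤ) - e₃ - e₂ := by omega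
          have h' := H3
          zify at h'
          rw [hc] at h'
          exact h'
        refine assembleAux _ _ _ _ _ _ h0X1 h0X2 h0Y1 h0Y2 h0Z ?_ ?_ ?_ ?_ hZL
        · nlinarith [hP]
        · nlinarith [hP, hQ2]
        · nlinarith [K2]
        · nlinarith [K2, h0X1, h0Y2]
    · -- region (iii)
      rw [show min a₂ e₃ = e₃ by omega, show min (a₂ - e₃) e₂ = a₂ - e₃ by omega] at H3 H4
      rw [show min (a₂ - e₃ - e₂) e₁ = 0 by omega] at H3
      have hc : ((a₂ - e₃ : ℕ) : ℤ) = (a₂:ℤ) - e₃ := by omega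
      have K3 : (e₁:ℤ) * a₁ + e₂ * a₂ + e₃ * a₂ ≤
          (e₃:ℤ) * a₃ + ((a₂:ℤ) - e₃) * a₂ := by
        have h' := H3
        zify at h'
        rw [hc] at h'
        linarith
      have K4 : (e₂:ℤ) * a₂ + e₃ * a₂ ≤ (e₃:ℤ) * a₃ + ((a₂:ℤ) - e₃) * a₂ := by
        have h' := H4
        zify at h'
        rw [hc] at h'
        exact h'
      have c23 : (a₂:ℤ) ≤ (e₂:ℤ) + e₃ := by exact_mod_cast h23'
      have hM1 : (0:ℤ) ≤ (a₁:ℤ) * ((e₂:ℤ) + e₃ - a₂) := by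
        apply mul_nonneg ca1.le; linarith
      have hM2 : (0:ℤ) ≤ ((a₂:ℤ) - a₁) * ((e₂:ℤ) + e₃ - a₂) := by
        apply mul_nonneg (by linarith) (by linarith)
      refine assembleAux _ _ _ _ _ _ h0X1 h0X2 h0Y1 h0Y2 h0Z ?_ ?_ ?_ ?_ hZL
      · nlinarith [hP]
      · nlinarith [K4, hM1]
      · nlinarith [K3, hM2]
      · nlinarith [K3]
  · -- a₂ ≤ e₃
    rw [min_eq_left (by exact_mod_cast hB : ((a₂:ℤ) ≤ (e₃:ℤ)))]
    rw [show min a₂ e₃ = a₂ by omega, show min (a₂ - e₃) e₂ = 0 by omega,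
      show min (a₂ - e₃ - e₂) e₁ = 0 by omega] at H3
    have K1 : (e₁:ℤ) * a₁ + e₂ * a₂ + e₃ * a₂ ≤ (a₂:ℤ) * a₃ := by
      have h' := H3
      zify at h'
      linarith
    have hZL : (a₂:ℤ) * e₃ - ((a₃:ℤ) - a₂) * a₂ ≤
        ((a₂:ℤ) - ((a₃:ℤ) - a₂)) * e₃ + ((a₃:ℤ) - a₂) ^ 2 := by
      nlinarith [mul_nonneg (by linarith : (0:ℤ) ≤ (a₃:ℤ) - a₂)
        (by linarith : (0:ℤ) ≤ (a₃:ℤ) - e₃)]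
    have hN1 : (0:ℤ) ≤ ((a₂:ℤ) - a₁) * ((a₃:ℤ) - e₂ - e₃) := by
      apply mul_nonneg (by linarith) (by linarith)
    have hN2 : (0:ℤ) ≤ (a₁:ℤ) * ((a₃:ℤ) - a₂) := by
      apply mul_nonneg ca1.le (by linarith)
    have hN3 : (0:ℤ) ≤ (a₁:ℤ) * ((a₃:ℤ) - e₁ - e₂ - e₃) := by
      apply mul_nonneg ca1.le (by linarith)
    have hN4 : (0:ℤ) ≤ ((a₂:ℤ) - a₁) * ((a₃:ℤ) - a₂) := by
      apply mul_nonneg (by linarith) (by linarith)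
    have hPB : (0:ℤ) ≤ ((a₃:ℤ) - a₂) * a₂ := by
      apply mul_nonneg (by linarith) (by positivity)
    refine assembleAux _ _ _ _ _ _ h0X1 h0X2 h0Y1 h0Y2 h0Z ?_ ?_ ?_ ?_ hZL
    · nlinarith [hPB]
    · nlinarith [hN1, hN2]
    · nlinarith [hN3, hN4]
    · nlinarith [K1]

/-- nonemptiness of the interval `I_{u+v+y+w} = J₁ ∩ J₂`
for a wide Young diagram with three distinct row lengths (computed in `ℤ`). -/
theorem quad_interval_nonempty (a₁ a₂ a₃ e₁ e₂ e₃ : ℕ)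
    (ha1 : 0 < a₁) (ha12 : a₁ < a₂) (ha23 : a₂ < a₃)
    (he1 : 0 < e₁) (he2 : 0 < e₂) (he3 : 0 < e₃)
    (b₂ b₃ : ℤ) (hb2 : b₂ = (a₂ : ℤ) - (a₁ : ℤ)) (hb3 : b₃ = (a₃ : ℤ) - (a₂ : ℤ))
    (hw : Wide (Multiset.replicate e₁ a₁ + Multiset.replicate e₂ a₂ +
      Multiset.replicate e₃ a₃)) :
    max 0 ((a₂ : ℤ) * (e₃ : ℤ) - b₃ * min (a₂ : ℤ) (e₃ : ℤ)) ≤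
      min
        (min ((a₁ : ℤ) * (e₃ : ℤ)) ((a₁ : ℤ) * ((a₂ : ℤ) - (e₁ : ℤ) - (e₂ : ℤ))) +
          min (b₂ * (e₃ : ℤ)) (b₂ * ((a₂ : ℤ) - (e₂ : ℤ))))
        (((a₂ : ℤ) - b₃) * (e₃ : ℤ) + b₃ ^ 2) :=
  quad_interval_nonempty_aux a₁ a₂ a₃ e₁ e₂ e₃ ha1 ha12 ha23 he1 he2 he3 b₂ b₃ hb2 hb3 hw
end

section
/- Let a_1 < a_2 be positive integers and let e_1, e_2 be positive integers. If the Young diagram Y(a;e) with e_1 rows of length a_1 and e_2 rows of length a_2 is wide, then Y(a;e) has an allocation. -/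
-- Auxiliary lemmas
lemma sort_two (E1 E2 A1 A2 : ℕ) (h : A1 ≤ A2) :
    Multiset.sort (Multiset.replicate E1 A1 + Multiset.replicate E2 A2) (· ≤ ·)
      = List.replicate E1 A1 ++ List.replicate E2 A2 := by
  apply List.Perm.eq_of_pairwise' (Multiset.pairwise_sort _ _) ?h2 (Multiset.coe_eq_coe.mp ?h1)
  rotate_left
  · rw [Multiset.sort_eq]; rfl
  · simp [List.Pairwise, List.pairwise_append, List.pairwise_replicate, List.mem_replicate]
    exact fun _ _ => h

lemma topSum_two (E1 E2 A1 A2 w : ℕ) (h : A1 ≤ A2) :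
    topSum (Multiset.replicate E1 A1 + Multiset.replicate E2 A2) w
      = min w E2 * A2 + min (w - E2) E1 * A1 := by
  rw [topSum, sort_two E1 E2 A1 A2 h, List.reverse_append, List.reverse_replicate,
      List.reverse_replicate, List.take_append, List.take_replicate,
      List.sum_append, List.sum_replicate, List.length_replicate, List.take_replicate,
      List.sum_replicate]
  simp [smul_eq_mul]

lemma sum_if_le (v n w : ℕ) : ∑ c ∈ Finset.Icc 1 w, (if c ≤ v then n else 0) = n * min w v := by
  induction w with
  | zero => simp
  | succ w ih =>
    rw [Finset.sum_Icc_succ_top (by omega), ih]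
    rcases le_or_gt (w+1) v with h | h
    · rw [if_pos h, Nat.min_eq_left h, Nat.min_eq_left (by omega), Nat.mul_succ]
    · rw [if_neg (by omega), Nat.min_eq_right (by omega), Nat.min_eq_right (by omega), add_zero]

lemma colSum_two (E1 E2 A1 A2 w : ℕ) :
    colSum (Multiset.replicate E1 A1 + Multiset.replicate E2 A2) w
      = E1 * min w A1 + E2 * min w A2 := by
  simp only [colSum, Multiset.filter_add, Multiset.card_add, Finset.sum_add_distrib]
  congr 1 <;>
  · rw [← sum_if_le]
    apply Finset.sum_congr rfl
    intro c _
    split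
    · next hc =>
        rw [Multiset.filter_eq_self.2 (fun b hb => by
          rw [Multiset.eq_of_mem_replicate hb]; exact hc), Multiset.card_replicate]
    · next hc =>
        rw [Multiset.filter_eq_nil.2 (fun b hb => by
          rw [Multiset.eq_of_mem_replicate hb]; omega), Multiset.card_zero]

lemma key_exists (u v w x y zz : ℕ) (f1 : u + v ≤ x + y) (f2 : w ≤ y + zz) (f3 : u ≤ x)
    (f4 : u + v ≤ x + w) (f5 : w ≤ v + zz) :
    ∃ t s1 s2, t + s1 = v ∧ t + s2 = w ∧ u + s1 ≤ x ∧ t ≤ y ∧ s2 ≤ zz := by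
  rcases Nat.le_total (u + v - x) (w - zz) with h | h
  · exact ⟨w - zz, v - (w - zz), w - (w - zz), by omega, by omega, by omega, by omega, by omega⟩
  · exact ⟨u + v - x, v - (u + v - x), w - (u + v - x), by omega, by omega, by omega, by omega,
      by omega⟩


/-- a wide Young diagram with two distinct row lengths has an allocation. -/
theorem wide_implies_allocation_two (a e : ℕ → ℕ)
    (ha0 : a 0 = 0) (ha1 : 0 < a 1) (ha12 : a 1 < a 2)
    (he : ∀ i, 1 ≤ i → i ≤ 2 → 0 < e i)
    (hw : Wide (rowMultiset 2 a e)) :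
    HasAllocation 2 a e := by
  have he1 : 0 < e 1 := he 1 le_rfl (by omega)
  have he2 : 0 < e 2 := he 2 (by omega) le_rfl
  have hR : rowMultiset 2 a e
      = Multiset.replicate (e 1) (a 1) + Multiset.replicate (e 2) (a 2) := by
    rw [rowMultiset, show Finset.Icc 1 2 = ({1, 2} : Finset ℕ) by decide,
      Finset.sum_insert (by decide), Finset.sum_singleton]
  -- Fact A : e 1 + e 2 ≤ a 2
  have hA : e 1 + e 2 ≤ a 2 := by
    have h1 := hw _ le_rfl 1 one_pos
    rw [hR, colSum_two, topSum_two _ _ _ _ _ (le_of_lt ha12)] at h1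
    rw [Nat.min_eq_left ha1, Nat.min_eq_left (by omega), Nat.min_eq_left he2,
      Nat.sub_eq_zero_of_le he2, Nat.zero_min] at h1
    simpa using h1
  -- Fact B : e 1 ≤ a 1
  have hB : e 1 ≤ a 1 := by
    have hS : Multiset.replicate (e 1) (a 1) ≤ rowMultiset 2 a e := by
      rw [hR]; exact Multiset.le_add_right _ _
    have h1 := hw _ hS 1 one_pos
    rw [show Multiset.replicate (e 1) (a 1)
        = Multiset.replicate (e 1) (a 1) + Multiset.replicate 0 (a 2) by simp] at h1
    rw [colSum_two, topSum_two _ _ _ _ _ (le_of_lt ha12)] at h1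
    rw [Nat.min_eq_left ha1, Nat.sub_zero, Nat.min_eq_left he1] at h1
    simp at h1
    omega
  -- Fact D : the width-(a 1) inequality
  have hD : e 1 * a 1 + e 2 * a 1
      ≤ min (a 1) (e 2) * a 2 + min (a 1 - e 2) (e 1) * a 1 := by
    have h1 := hw _ le_rfl (a 1) ha1
    rw [hR, colSum_two, topSum_two _ _ _ _ _ (le_of_lt ha12)] at h1
    rwa [Nat.min_self, Nat.min_eq_left (le_of_lt ha12)] at h1
  obtain ⟨B2, hB2⟩ : ∃ B2, a 2 = a 1 + B2 := ⟨a 2 - a 1, by omega⟩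
  have hB2pos : 0 < B2 := by omega
  -- product-level facts
  have f1 : e 1 * a 1 + e 2 * a 1 ≤ a 1 * a 1 + a 1 * B2 := by
    have := Nat.mul_le_mul_right (a 1) hA
    nlinarith
  have f2 : e 2 * B2 ≤ a 1 * B2 + B2 * B2 := by
    have h2 : e 2 ≤ a 1 + B2 := by omega
    have := Nat.mul_le_mul_right B2 h2
    nlinarith
  have f3 : e 1 * a 1 ≤ a 1 * a 1 := Nat.mul_le_mul_right _ hB
  have f5 : e 2 * B2 ≤ e 2 * a 1 + B2 * B2 := by
    rcases le_total B2 (a 1) with h | h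
    · have := Nat.mul_le_mul_left (e 2) h
      omega
    · have h2 : e 2 ≤ a 1 + B2 := by omega
      zify
      nlinarith [mul_nonneg (by push_cast; omega : (0:ℤ) ≤ (a 1 : ℤ) + B2 - e 2)
        (by push_cast; omega : (0:ℤ) ≤ (B2 : ℤ) - a 1), sq_nonneg ((a 1 : ℤ))]
  have f4 : e 1 * a 1 + e 2 * a 1 ≤ a 1 * a 1 + e 2 * B2 := by
    rcases le_total (a 1) (e 2) with h | h
    · -- min (a 1) (e 2) = a 1, a 1 - e 2 = 0
      rw [Nat.min_eq_left h, Nat.sub_eq_zero_of_le h, Nat.zero_min, Nat.zero_mul,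
        add_zero, hB2] at hD
      have h3 : a 1 * B2 ≤ e 2 * B2 := Nat.mul_le_mul_right _ h
      nlinarith
    · -- min (a 1) (e 2) = e 2
      rw [Nat.min_eq_right h, hB2] at hD
      have h3 : min (a 1 - e 2) (e 1) * a 1 ≤ (a 1 - e 2) * a 1 :=
        Nat.mul_le_mul_right _ (Nat.min_le_left _ _)
      have h4 : (a 1 - e 2) * a 1 + e 2 * a 1 = a 1 * a 1 := by
        zify [h]; ring
      nlinarith
  obtain ⟨t, s1, s2, hts1, hts2, hc11, hty, hs2⟩ :=
    key_exists (e 1 * a 1) (e 2 * a 1) (e 2 * B2) (a 1 * a 1) (a 1 * B2) (B2 * B2)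
      f1 f2 f3 f4 f5
  refine ⟨fun i j k => if i ≤ 1 then e 1 * a 1 else
      if j = 1 then (if k = 1 then s1 else t) else (if k = 1 then t else s2), ?_, ?_, ?_⟩
  · intro i j h1 h2 h3
    interval_cases i <;> interval_cases j <;>
      simp [Finset.sum_Icc_succ_top, Finset.Icc_self, ha0, hB2] <;> omega
  · intro i k h1 h2 h3
    interval_cases i <;> interval_cases k <;>
      simp [Finset.sum_Icc_succ_top, Finset.Icc_self, ha0, hB2] <;> omega
  · intro j k h1 h2 h3 h4
    have hIcc : Finset.Icc 1 2 = ({1, 2} : Finset ℕ) := by decide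
    have hsub : a 2 - a 1 = B2 := by omega
    interval_cases j <;> interval_cases k
    · rw [show max 1 1 = 1 from rfl, hIcc, Finset.sum_insert (by decide),
        Finset.sum_singleton]
      norm_num [ha0]
      omega
    · rw [show max 1 2 = 2 from rfl, Finset.Icc_self, Finset.sum_singleton]
      norm_num [ha0, hsub]
      omega
    · rw [show max 2 1 = 2 from rfl, Finset.Icc_self, Finset.sum_singleton]
      norm_num [ha0, hsub]
      rw [Nat.mul_comm]
      omega
    · rw [show max 2 2 = 2 from rfl, Finset.Icc_self, Finset.sum_singleton]
      norm_num [hsub]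
      omega
end
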